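/- arXiv:1710.04640 — 7 statements merged into one kernel-verified Lean document; each statement's English description precedes it below -/
import Mathlib

section
/- No Aztec rectangle AR(a,b) admits a tiling by right-oriented 180-trominoes. Concretely: consider the diagonal of cells on the southwestern boundary of AR(a,b). If every cell of the region is covered by trominoes from the set {{(x,y),(x,y+1),(x+1,y+1)}, {(x,y),(x+1,y),(x+1,y+1)} : x,y ∈ ℤ}, then covering all southwestern boundary cells forces two tiles to overlap or a cell adjacent to the boundary to be left uncoverable. -/
/-- An L-tromino: a 2×2 square of cells minus one corner (any rotation). -/
def IsLTromino (t : Set (ℤ × ℤ)) : Prop :=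
  ∃ x y : ℤ, ∃ c ∈ ({(x, y), (x+1, y), (x, y+1), (x+1, y+1)} : Set (ℤ × ℤ)),
    t = ({(x, y), (x+1, y), (x, y+1), (x+1, y+1)} : Set (ℤ × ℤ)) \ {c}

/-- A right-oriented 180-tromino. -/
def Is180Tromino (t : Set (ℤ × ℤ)) : Prop :=
  ∃ x y : ℤ, t = ({(x, y), (x, y+1), (x+1, y+1)} : Set (ℤ × ℤ)) ∨
             t = ({(x, y), (x+1, y), (x+1, y+1)} : Set (ℤ × ℤ))

/-- An I-tromino. -/
def IsITromino (t : Set (ℤ × ℤ)) : Prop :=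
  ∃ x y : ℤ, t = ({(x, y), (x+1, y), (x+2, y)} : Set (ℤ × ℤ)) ∨
             t = ({(x, y), (x, y+1), (x, y+2)} : Set (ℤ × ℤ))

/-- `T` is a tiling of the region `R` by tiles satisfying `P`. -/
def IsTilingBy (P : Set (ℤ × ℤ) → Prop) (T : Set (Set (ℤ × ℤ))) (R : Set (ℤ × ℤ)) : Prop :=
  (∀ t ∈ T, P t) ∧ T.PairwiseDisjoint id ∧ ⋃₀ T = R

/-- The Aztec rectangle AR(a,b): `a` cells on the southwestern side,
`b` cells on the northwestern side. -/
def aztecRect (a b : ℕ) : Set (ℤ × ℤ) :=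
  {p | (0 ≤ p.2 ∧ p.2 < (a : ℤ) ∧ (a : ℤ) - 1 - p.2 ≤ p.1 ∧ p.1 ≤ (a : ℤ) + p.2) ∨
       ((a : ℤ) ≤ p.2 ∧ p.2 < (b : ℤ) ∧ p.2 - a ≤ p.1 ∧ p.1 ≤ p.2 + a) ∨
       ((b : ℤ) ≤ p.2 ∧ p.2 < (a : ℤ) + b ∧ p.2 - a ≤ p.1 ∧ p.1 ≤ (a : ℤ) + 2*b - 1 - p.2)}

/-- The Aztec diamond AD(n): cells whose unit square lies in {|x|+|y| ≤ n+1}. -/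
def aztecDiamond (n : ℕ) : Set (ℤ × ℤ) :=
  {p | max |p.1| |p.1 + 1| + max |p.2| |p.2 + 1| ≤ (n : ℤ) + 1}

/-- The region graph of a region `R`: vertices are cells of `R`, edges between
cells at L¹-distance 1 and between `(a,b)` and `(a+1,b+1)`. -/
def regionGraph (R : Set (ℤ × ℤ)) : SimpleGraph (ℤ × ℤ) :=
  SimpleGraph.fromRel (fun p q => p ∈ R ∧ q ∈ R ∧
    (|p.1 - q.1| + |p.2 - q.2| = 1 ∨ (q.1 = p.1 + 1 ∧ q.2 = p.2 + 1)))

/-- A triangle in a graph: a 3-element set of pairwise adjacent vertices. -/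
def IsTriangle {V : Type*} (G : SimpleGraph V) (t : Finset V) : Prop :=
  t.card = 3 ∧ ∀ u ∈ t, ∀ v ∈ t, u ≠ v → G.Adj u v

/-- The intersection graph `I_R`: vertices are the triangles of the region graph of `R`,
two triangles adjacent iff they share a vertex. -/
def intersectionGraph (R : Set (ℤ × ℤ)) :
    SimpleGraph {t : Finset (ℤ × ℤ) // IsTriangle (regionGraph R) t} :=
  SimpleGraph.fromRel (fun t s => ((t : Finset (ℤ × ℤ)) ∩ (s : Finset (ℤ × ℤ))).Nonempty)

/-- Independent set in a graph. -/
def IsIndepSet {V : Type*} (G : SimpleGraph V) (S : Set V) : Prop :=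
  S.Pairwise (fun u v => ¬ G.Adj u v)


open Finset

def w3 (c : ZMod 3) : ℤ × ℤ := if c = 0 then (1,0) else if c = 1 then (0,1) else (-1,-1)

def V3 (c m : ZMod 3) : ℤ × ℤ := if m = 0 then 0 else if m = 1 then w3 c else w3 c + w3 (c+1)

lemma V3_step : ∀ c m : ZMod 3, V3 c (m+1) = V3 c m + w3 (c+m) := by decide

lemma w3_period : ∀ c : ZMod 3, w3 c + w3 (c+1) + w3 (c+2) = 0 := by decide

lemma sum_w3_range (n : ℕ) (s : ℤ) :
    ∑ i ∈ range n, w3 ((s + i : ℤ) : ZMod 3) = V3 (s : ZMod 3) (n : ZMod 3) := by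
  induction n with
  | zero => simp [V3]
  | succ n ih =>
      rw [sum_range_succ, ih]
      have h1 : ((s + n : ℤ) : ZMod 3) = (s : ZMod 3) + (n : ZMod 3) := by push_cast; ring
      have h2 : ((n+1 : ℕ) : ZMod 3) = (n : ZMod 3) + 1 := by push_cast; ring
      rw [h1, h2, V3_step]

def P3 (U : ZMod 3 → ℤ × ℤ) (c : ZMod 3) (k : ℕ) : ℤ × ℤ :=
  match k with
  | 0 => 0
  | 1 => U c
  | _ => U c + U (c+1)

lemma U_window (U : ZMod 3 → ℤ × ℤ) (c : ZMod 3) :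
    U c + U (c+1) + U (c+2) = U 0 + U 1 + U 2 := by
  fin_cases c
  · show U 0 + U (0+1) + U (0+2) = _
    norm_num
  · show U 1 + U (1+1) + U (1+2) = _
    have h1 : (1+1 : ZMod 3) = 2 := by decide
    have h2 : (1+2 : ZMod 3) = 0 := by decide
    rw [h1, h2]; abel
  · show U 2 + U (2+1) + U (2+2) = _
    have h1 : (2+1 : ZMod 3) = 0 := by decide
    have h2 : (2+2 : ZMod 3) = 1 := by decide
    rw [h1, h2]; abel

lemma sum_periodic (U : ZMod 3 → ℤ × ℤ) (m : ℕ) (n : ℕ) :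
    ∑ i ∈ range n, U ((m + i : ℕ) : ZMod 3)
      = (n / 3) • (U 0 + U 1 + U 2) + P3 U (m : ZMod 3) (n % 3) := by
  induction n with
  | zero => simp [P3]
  | succ n ih =>
      rw [sum_range_succ, ih]
      have hc : ((m + n : ℕ) : ZMod 3) = (m : ZMod 3) + ((n % 3 : ℕ) : ZMod 3) := by
        rw [ZMod.natCast_mod]; push_cast; ring
      have h3 : n % 3 = 0 ∨ n % 3 = 1 ∨ n % 3 = 2 := by omega
      rcases h3 with h | h | h
      · have e1 : (n+1)/3 = n/3 := by omega
        have e2 : (n+1)%3 = 1 := by omega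
        rw [hc, h, e1, e2]
        show _ = _ • _ + U (↑m)
        simp [P3]
      · have e1 : (n+1)/3 = n/3 := by omega
        have e2 : (n+1)%3 = 2 := by omega
        rw [hc, h, e1, e2]
        simp only [P3]
        push_cast
        abel
      · have e1 : (n+1)/3 = n/3 + 1 := by omega
        have e2 : (n+1)%3 = 0 := by omega
        rw [hc, h, e1, e2]
        simp only [P3]
        rw [succ_nsmul]
        have hw := U_window U ((m : ℕ) : ZMod 3)
        push_cast
        rw [← hw]
        abel


def rowStart (a : ℕ) (y : ℕ) : ℤ := if y < a then (a:ℤ) - 1 - y else (y:ℤ) - a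

def rowLen (a b : ℕ) (y : ℕ) : ℕ := if y < a then 2*y+2 else if y < b then 2*a+1 else 2*(a+b) - 2*y

def rowEmb (a : ℕ) (y : ℕ) : ℕ ↪ ℤ × ℤ :=
  ⟨fun i => (rowStart a y + i, (y : ℤ)), by
    intro i j h
    simp only [Prod.mk.injEq] at h
    omega⟩

lemma rowEmb_apply (a y i : ℕ) : rowEmb a y i = (rowStart a y + i, (y : ℤ)) := rfl

def RF (a b : ℕ) : Finset (ℤ × ℤ) :=
  (range (a+b)).biUnion fun y => (range (rowLen a b y)).map (rowEmb a y)

lemma coe_RF {a b : ℕ} (hab : a ≤ b) : (RF a b : Set (ℤ × ℤ)) = aztecRect a b := by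
  ext ⟨x, y⟩
  simp only [RF, coe_biUnion, mem_coe, mem_range, Set.mem_iUnion, Finset.mem_map, rowEmb_apply,
    Function.Embedding.coeFn_mk, aztecRect, Set.mem_setOf_eq, Prod.mk.injEq]
  constructor
  · rintro ⟨z, hz, i, hi, hx, hy⟩
    rw [rowLen] at hi
    rw [rowStart] at hx
    split_ifs at hi hx <;> omega
  · rintro h
    refine ⟨y.toNat, ?_, ⟨(x - rowStart a y.toNat).toNat, ?_, ?_, ?_⟩⟩ <;>
      (try simp only [rowStart, rowLen, mem_range]) <;> (try split_ifs) <;> omega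

lemma sum_RF (a b : ℕ) :
    ∑ p ∈ RF a b, w3 ((p.1 + p.2 : ℤ) : ZMod 3)
      = ∑ y ∈ range (a+b), V3 ((rowStart a y + y : ℤ) : ZMod 3) ((rowLen a b y : ℕ) : ZMod 3) := by
  rw [RF, Finset.sum_biUnion]
  · refine sum_congr rfl fun y hy => ?_
    rw [Finset.sum_map]
    simp only [rowEmb_apply, Function.Embedding.coeFn_mk]
    rw [← sum_w3_range (rowLen a b y) (rowStart a y + y)]
    refine sum_congr rfl fun i hi => ?_
    congr 1
    push_cast
    ring
  · intro s hs t ht hst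
    simp only [Function.onFun, Finset.disjoint_left, mem_map, mem_range, rowEmb_apply,
      Function.Embedding.coeFn_mk]
    rintro p ⟨i, hi, rfl⟩ ⟨j, hj, hp⟩
    simp only [Prod.mk.injEq] at hp
    have : s = t := by exact_mod_cast hp.2.symm
    exact hst this

def U1 (a : ℕ) (c : ZMod 3) : ℤ × ℤ := V3 ((a : ZMod 3) - 1) (2*c + 2)
def U2 (a : ℕ) (c : ZMod 3) : ℤ × ℤ := V3 (2*c - (a : ZMod 3)) (2*(a : ZMod 3) + 1)
def U3 (a b : ℕ) (c : ZMod 3) : ℤ × ℤ :=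
  V3 (2*c - (a : ZMod 3)) (2*(a : ZMod 3) + 2*(b : ZMod 3) - 2*c)

lemma total_eq (a b : ℕ) (hab : a ≤ b) :
    ∑ y ∈ range (a+b), V3 ((rowStart a y + y : ℤ) : ZMod 3) ((rowLen a b y : ℕ) : ZMod 3)
    = ((a/3) • (U1 a 0 + U1 a 1 + U1 a 2) + P3 (U1 a) ((0:ℕ) : ZMod 3) (a % 3))
      + (((b-a)/3) • (U2 a 0 + U2 a 1 + U2 a 2) + P3 (U2 a) ((a:ℕ) : ZMod 3) ((b-a) % 3))
      + ((a/3) • (U3 a b 0 + U3 a b 1 + U3 a b 2) + P3 (U3 a b) ((b:ℕ) : ZMod 3) (a % 3)) := by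
  rw [range_eq_Ico,
    ← sum_Ico_consecutive _ (Nat.zero_le b) (Nat.le_add_left b a),
    ← sum_Ico_consecutive _ (Nat.zero_le a) hab]
  congr 1
  · congr 1
    · -- band 1
      rw [sum_Ico_eq_sum_range]
      simp only [Nat.sub_zero, Nat.zero_add]
      rw [← sum_periodic (U1 a) 0 a]
      refine sum_congr rfl fun i hi => ?_
      simp only [mem_range] at hi
      simp only [Nat.zero_add]
      rw [U1, rowStart, rowLen, if_pos hi, if_pos hi]
      congr 1
      · push_cast; ring
      · push_cast; ring
    · -- band 2
      rw [sum_Ico_eq_sum_range]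
      rw [← sum_periodic (U2 a) a (b-a)]
      refine sum_congr rfl fun i hi => ?_
      simp only [mem_range] at hi
      rw [U2, rowStart, rowLen, if_neg (by omega), if_neg (by omega), if_pos (by omega)]
      congr 1
      · push_cast; ring
      · push_cast; ring
  · -- band 3
    rw [sum_Ico_eq_sum_range]
    rw [show a + b - b = a from by omega, ← sum_periodic (U3 a b) b a]
    refine sum_congr rfl fun i hi => ?_
    simp only [mem_range] at hi
    rw [U3, rowStart, rowLen, if_neg (by omega), if_neg (by omega), if_neg (by omega)]
    congr 1
    · push_cast; ring
    · rw [show 2*(a+b) - 2*(b+i) = 2*(a-i) from by omega]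
      have hia : i ≤ a := by omega
      push_cast [Nat.cast_sub hia]
      ring

lemma total_ne (a b : ℕ) (ha : 0 < a) (hab : a ≤ b) :
    ∑ y ∈ range (a+b), V3 ((rowStart a y + y : ℤ) : ZMod 3) ((rowLen a b y : ℕ) : ZMod 3) ≠ 0 := by
  rw [total_eq a b hab]
  intro h
  rw [Prod.ext_iff] at h
  obtain ⟨h1, h2⟩ := h
  have h3a : a % 3 = 0 ∨ a % 3 = 1 ∨ a % 3 = 2 := by omega
  have h3b : b % 3 = 0 ∨ b % 3 = 1 ∨ b % 3 = 2 := by omega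
  rcases h3a with ha3 | ha3 | ha3 <;> rcases h3b with hb3 | hb3 | hb3
  · have hA : (a : ZMod 3) = ((0 : ℕ) : ZMod 3) := by rw [← ZMod.natCast_mod a 3, ha3]
    have hB : (b : ZMod 3) = ((0 : ℕ) : ZMod 3) := by rw [← ZMod.natCast_mod b 3, hb3]
    rw [ha3, show (b - a) % 3 = 0 from by omega] at h1 h2
    simp (config := { decide := true }) only [U1, U2, U3, hA, hB, V3, w3, P3,
      Prod.fst_add, Prod.snd_add, Prod.smul_fst, Prod.smul_snd, smul_eq_mul, nsmul_eq_mul,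
      Prod.fst_zero, Prod.snd_zero, if_true, if_false] at h1 h2
    norm_num at h1 h2
    try omega
  · have hA : (a : ZMod 3) = ((0 : ℕ) : ZMod 3) := by rw [← ZMod.natCast_mod a 3, ha3]
    have hB : (b : ZMod 3) = ((1 : ℕ) : ZMod 3) := by rw [← ZMod.natCast_mod b 3, hb3]
    rw [ha3, show (b - a) % 3 = 1 from by omega] at h1 h2
    simp (config := { decide := true }) only [U1, U2, U3, hA, hB, V3, w3, P3,
      Prod.fst_add, Prod.snd_add, Prod.smul_fst, Prod.smul_snd, smul_eq_mul, nsmul_eq_mul,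
      Prod.fst_zero, Prod.snd_zero, if_true, if_false] at h1 h2
    norm_num at h1
    try omega
  · have hA : (a : ZMod 3) = ((0 : ℕ) : ZMod 3) := by rw [← ZMod.natCast_mod a 3, ha3]
    have hB : (b : ZMod 3) = ((2 : ℕ) : ZMod 3) := by rw [← ZMod.natCast_mod b 3, hb3]
    rw [ha3, show (b - a) % 3 = 2 from by omega] at h1 h2
    simp (config := { decide := true }) only [U1, U2, U3, hA, hB, V3, w3, P3,
      Prod.fst_add, Prod.snd_add, Prod.smul_fst, Prod.smul_snd, smul_eq_mul, nsmul_eq_mul,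
      Prod.fst_zero, Prod.snd_zero, if_true, if_false] at h1 h2
    norm_num at h1 h2
    try omega
  · have hA : (a : ZMod 3) = ((1 : ℕ) : ZMod 3) := by rw [← ZMod.natCast_mod a 3, ha3]
    have hB : (b : ZMod 3) = ((0 : ℕ) : ZMod 3) := by rw [← ZMod.natCast_mod b 3, hb3]
    rw [ha3, show (b - a) % 3 = 2 from by omega] at h1 h2
    simp (config := { decide := true }) only [U1, U2, U3, hA, hB, V3, w3, P3,
      Prod.fst_add, Prod.snd_add, Prod.smul_fst, Prod.smul_snd, smul_eq_mul, nsmul_eq_mul,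
      Prod.fst_zero, Prod.snd_zero, if_true, if_false] at h1 h2
    norm_num at h1 h2
    try omega
  · have hA : (a : ZMod 3) = ((1 : ℕ) : ZMod 3) := by rw [← ZMod.natCast_mod a 3, ha3]
    have hB : (b : ZMod 3) = ((1 : ℕ) : ZMod 3) := by rw [← ZMod.natCast_mod b 3, hb3]
    rw [ha3, show (b - a) % 3 = 0 from by omega] at h1 h2
    simp (config := { decide := true }) only [U1, U2, U3, hA, hB, V3, w3, P3,
      Prod.fst_add, Prod.snd_add, Prod.smul_fst, Prod.smul_snd, smul_eq_mul, nsmul_eq_mul,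
      Prod.fst_zero, Prod.snd_zero, if_true, if_false] at h1 h2
    norm_num at h1 h2
    try omega
  · have hA : (a : ZMod 3) = ((1 : ℕ) : ZMod 3) := by rw [← ZMod.natCast_mod a 3, ha3]
    have hB : (b : ZMod 3) = ((2 : ℕ) : ZMod 3) := by rw [← ZMod.natCast_mod b 3, hb3]
    rw [ha3, show (b - a) % 3 = 1 from by omega] at h1 h2
    simp (config := { decide := true }) only [U1, U2, U3, hA, hB, V3, w3, P3,
      Prod.fst_add, Prod.snd_add, Prod.smul_fst, Prod.smul_snd, smul_eq_mul, nsmul_eq_mul,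
      Prod.fst_zero, Prod.snd_zero, if_true, if_false] at h1 h2
    norm_num at h1 h2
    try omega
  · have hA : (a : ZMod 3) = ((2 : ℕ) : ZMod 3) := by rw [← ZMod.natCast_mod a 3, ha3]
    have hB : (b : ZMod 3) = ((0 : ℕ) : ZMod 3) := by rw [← ZMod.natCast_mod b 3, hb3]
    rw [ha3, show (b - a) % 3 = 1 from by omega] at h1 h2
    simp (config := { decide := true }) only [U1, U2, U3, hA, hB, V3, w3, P3,
      Prod.fst_add, Prod.snd_add, Prod.smul_fst, Prod.smul_snd, smul_eq_mul, nsmul_eq_mul,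
      Prod.fst_zero, Prod.snd_zero, if_true, if_false] at h1 h2
    norm_num at h1 h2
    try omega
  · have hA : (a : ZMod 3) = ((2 : ℕ) : ZMod 3) := by rw [← ZMod.natCast_mod a 3, ha3]
    have hB : (b : ZMod 3) = ((1 : ℕ) : ZMod 3) := by rw [← ZMod.natCast_mod b 3, hb3]
    rw [ha3, show (b - a) % 3 = 2 from by omega] at h1 h2
    simp (config := { decide := true }) only [U1, U2, U3, hA, hB, V3, w3, P3,
      Prod.fst_add, Prod.snd_add, Prod.smul_fst, Prod.smul_snd, smul_eq_mul, nsmul_eq_mul,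
      Prod.fst_zero, Prod.snd_zero, if_true, if_false] at h1 h2
    norm_num at h1 h2
    try omega
  · have hA : (a : ZMod 3) = ((2 : ℕ) : ZMod 3) := by rw [← ZMod.natCast_mod a 3, ha3]
    have hB : (b : ZMod 3) = ((2 : ℕ) : ZMod 3) := by rw [← ZMod.natCast_mod b 3, hb3]
    rw [ha3, show (b - a) % 3 = 0 from by omega] at h1 h2
    simp (config := { decide := true }) only [U1, U2, U3, hA, hB, V3, w3, P3,
      Prod.fst_add, Prod.snd_add, Prod.smul_fst, Prod.smul_snd, smul_eq_mul, nsmul_eq_mul,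
      Prod.fst_zero, Prod.snd_zero, if_true, if_false] at h1 h2
    norm_num at h1 h2
    try omega

open Classical in
noncomputable def tf (u : Set (ℤ × ℤ)) : Finset (ℤ × ℤ) :=
  if h : u.Finite then h.toFinset else ∅

lemma coe_tf {u : Set (ℤ × ℤ)} (h : u.Finite) : (tf u : Set (ℤ × ℤ)) = u := by
  rw [tf]
  rw [dif_pos h, Set.Finite.coe_toFinset]

lemma tromino_finite {t : Set (ℤ × ℤ)} (ht : Is180Tromino t) : t.Finite := by
  obtain ⟨x, y, h | h⟩ := ht <;> rw [h] <;>
    exact (Set.finite_singleton _).insert _ |>.insert _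

lemma tromino_sum {t : Set (ℤ × ℤ)} (ht : Is180Tromino t) :
    ∑ p ∈ tf t, w3 ((p.1 + p.2 : ℤ) : ZMod 3) = 0 := by
  obtain ⟨x, y, h | h⟩ := ht
  · have hft : tf t = ({(x, y), (x, y+1), (x+1, y+1)} : Finset (ℤ × ℤ)) := by
      apply Finset.coe_injective
      rw [coe_tf (tromino_finite ⟨x, y, Or.inl h⟩), h]
      simp
    rw [hft]
    rw [Finset.sum_insert (by simp), Finset.sum_insert (by simp),
      Finset.sum_singleton]
    have e1 : ((x + (y+1) : ℤ) : ZMod 3) = ((x + y : ℤ) : ZMod 3) + 1 := by push_cast; ring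
    have e2 : ((x + 1 + (y+1) : ℤ) : ZMod 3) = ((x + y : ℤ) : ZMod 3) + 2 := by push_cast; ring
    rw [e1, e2]
    have : ∀ c : ZMod 3, w3 c + (w3 (c+1) + w3 (c+2)) = 0 := by decide
    exact this _
  · have hft : tf t = ({(x, y), (x+1, y), (x+1, y+1)} : Finset (ℤ × ℤ)) := by
      apply Finset.coe_injective
      rw [coe_tf (tromino_finite ⟨x, y, Or.inr h⟩), h]
      simp
    rw [hft]
    rw [Finset.sum_insert (by simp), Finset.sum_insert (by simp),
      Finset.sum_singleton]
    have e1 : ((x + 1 + y : ℤ) : ZMod 3) = ((x + y : ℤ) : ZMod 3) + 1 := by push_cast; ring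
    have e2 : ((x + 1 + (y+1) : ℤ) : ZMod 3) = ((x + y : ℤ) : ZMod 3) + 2 := by push_cast; ring
    rw [e1, e2]
    have : ∀ c : ZMod 3, w3 c + (w3 (c+1) + w3 (c+2)) = 0 := by decide
    exact this _

theorem aztecRect_no_180_cover (a b : ℕ) (ha : 0 < a) (hab : a ≤ b) :
    ¬ ∃ T : Set (Set (ℤ × ℤ)), IsTilingBy Is180Tromino T (aztecRect a b) := by
  rintro ⟨T, hP, hdisj, hcover⟩
  have hRcoe : (RF a b : Set (ℤ × ℤ)) = aztecRect a b := coe_RF hab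
  have hRfin : (aztecRect a b).Finite := hRcoe ▸ (RF a b).finite_toSet
  have hTsub : ∀ t ∈ T, t ⊆ aztecRect a b := fun t ht => hcover ▸ Set.subset_sUnion_of_mem ht
  have hTfin : T.Finite := Set.Finite.subset hRfin.finite_subsets (fun t ht => hTsub t ht)
  have hcoe_tf : ∀ t ∈ T, (tf t : Set (ℤ × ℤ)) = t := fun t ht => coe_tf (tromino_finite (hP t ht))
  -- the biUnion of finset tiles is RF
  have hbU : hTfin.toFinset.biUnion tf = RF a b := by
    apply Finset.coe_injective
    rw [coe_biUnion, hRcoe]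
    rw [← hcover, Set.sUnion_eq_biUnion]
    simp only [Set.Finite.coe_toFinset]
    apply Set.iUnion₂_congr
    intro t ht
    exact hcoe_tf t ht
  have hpd : (↑hTfin.toFinset : Set (Set (ℤ × ℤ))).PairwiseDisjoint tf := by
    intro s hs t ht hst
    simp only [Set.Finite.coe_toFinset] at hs ht
    have := hdisj hs ht hst
    rw [Function.onFun, ← Finset.disjoint_coe, hcoe_tf s hs, hcoe_tf t ht]
    exact this
  have hzero : ∑ p ∈ RF a b, w3 ((p.1 + p.2 : ℤ) : ZMod 3) = 0 := by
    rw [← hbU, Finset.sum_biUnion hpd]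
    apply Finset.sum_eq_zero
    intro t ht
    exact tromino_sum (hP t (by simpa using ht))
  rw [sum_RF] at hzero
  exact total_ne a b ha hab hzero
end

section
/- The Aztec diamond AD(n) admits no tiling by right-oriented 180-trominoes for any n ≥ 1. -/
def twt (s : ℤ) : ℤ := if s % 3 = 2 then -2 else 1

def tphi (m : ℤ) : ℤ := if m % 3 = 0 then 1 else if m % 3 = 1 then 2 else 0

lemma tphi_step (m : ℤ) : tphi m = tphi (m-1) + twt m := by
  unfold tphi twt; split_ifs <;> omega

lemma twt_congr {a b : ℤ} (h : a % 3 = b % 3) : twt a = twt b := by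
  unfold twt; rw [h]

lemma twt3 (s : ℤ) : twt s + twt (s+1) + twt (s+2) = 0 := by
  unfold twt; split_ifs <;> omega

lemma sum_range_twt (k : ℕ) (l : ℤ) :
    ∑ i ∈ Finset.range k, twt (l + i) = tphi (l + k - 1) - tphi (l - 1) := by
  induction k with
  | zero => simp
  | succ k ih =>
      rw [Finset.sum_range_succ, ih]
      have h1 : tphi (l + k) = tphi (l + k - 1) + twt (l + k) := tphi_step _
      push_cast
      rw [show l + ((k:ℤ) + 1) - 1 = l + k by ring, h1]
      ring

lemma sum_twt_two (k : ℕ) (c : ℤ) :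
    ∑ j ∈ Finset.range k, twt (2*(j:ℤ) + c) =
      (if k % 3 = 0 then 0 else if k % 3 = 1 then twt c else twt c + twt (c+2)) := by
  induction k with
  | zero => simp
  | succ k ih =>
      rw [Finset.sum_range_succ, ih]
      have h3 : k % 3 = 0 ∨ k % 3 = 1 ∨ k % 3 = 2 := by omega
      rcases h3 with h | h | h
      · simp only [h, show (k+1) % 3 = 1 by omega]
        norm_num
        exact twt_congr (by omega)
      · simp only [h, show (k+1) % 3 = 2 by omega]
        norm_num
        rw [twt_congr (show (2*(k:ℤ)+c) % 3 = (c+2) % 3 by omega)]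
      · simp only [h, show (k+1) % 3 = 0 by omega]
        norm_num
        rw [twt_congr (show (2*(k:ℤ)+c) % 3 = (c+1) % 3 by omega)]
        have := twt3 c; omega

def adLen (n j : ℕ) : ℕ := if j < n then 2*j+2 else 2*(2*n - j)
def adStart (n j : ℕ) : ℤ := if j < n then -(j+1 : ℤ) else (j : ℤ) - 2*n

def adF (n : ℕ) : Finset (ℤ × ℤ) :=
  (Finset.range (2*n)).biUnion fun j =>
    (Finset.range (adLen n j)).image fun i : ℕ => (adStart n j + (i:ℤ), (j : ℤ) - n)

lemma max_abs_eq (a : ℤ) : max |a| |a+1| = if 0 ≤ a then a + 1 else -a := by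
  split_ifs with h
  · rw [abs_of_nonneg h, abs_of_nonneg (by omega), max_eq_right (by omega)]
  · rw [abs_of_neg (by omega), abs_of_nonpos (by omega), max_eq_left (by omega)]

lemma mem_adF (n : ℕ) (p : ℤ × ℤ) :
    p ∈ adF n ↔ p ∈ aztecDiamond n := by
  obtain ⟨a, b⟩ := p
  simp only [adF, Finset.mem_biUnion, Finset.mem_range, Finset.mem_image,
    aztecDiamond, Set.mem_setOf_eq, Prod.mk.injEq, max_abs_eq]
  constructor
  · rintro ⟨j, hj, i, hi, rfl, rfl⟩
    unfold adLen at hi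
    unfold adStart
    split_ifs at hi ⊢ with h h' h' <;> omega
  · rintro hab
    by_cases hb : 0 ≤ b
    · have hbn : b < n := by split_ifs at hab <;> omega
      refine ⟨((n:ℤ) + b).toNat, by omega, (a + n - b).toNat, ?_, ?_⟩
      · unfold adLen; rw [if_neg (by omega)]
        split_ifs at hab <;> omega
      · unfold adStart; rw [if_neg (by omega)]
        split_ifs at hab <;> omega
    · have hbn : -(n:ℤ) ≤ b := by split_ifs at hab <;> omega
      refine ⟨((n:ℤ) + b).toNat, by omega, (a + n + b + 1).toNat, ?_, ?_⟩
      · unfold adLen; rw [if_pos (by omega)]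
        split_ifs at hab <;> omega
      · unfold adStart; rw [if_pos (by omega)]
        split_ifs at hab <;> omega

lemma row_disj (n : ℕ) : Set.PairwiseDisjoint ↑(Finset.range (2*n))
    (fun j : ℕ => (Finset.range (adLen n j)).image
      fun i : ℕ => (adStart n j + (i:ℤ), (j : ℤ) - n)) := by
  intro j1 _ j2 _ hne
  refine Finset.disjoint_left.2 ?_
  rintro p hp1 hp2
  simp only [Finset.mem_image] at hp1 hp2
  obtain ⟨i1, -, rfl⟩ := hp1
  obtain ⟨i2, -, h2⟩ := hp2
  apply hne
  have := congrArg Prod.snd h2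
  simp only at this
  omega

lemma sum_adF (n : ℕ) : ∑ p ∈ adF n, twt (p.1 + p.2) =
    (n:ℤ) * (tphi ((n:ℤ)-1) - tphi (-(n:ℤ)-2)) + ∑ j ∈ Finset.range n, twt (2*(j:ℤ) - n) := by
  rw [adF, Finset.sum_biUnion (row_disj n)]
  have hrow : ∀ j ∈ Finset.range (2*n),
      (∑ p ∈ (Finset.range (adLen n j)).image
          (fun i : ℕ => (adStart n j + (i:ℤ), (j : ℤ) - n)), twt (p.1 + p.2))
      = tphi (adStart n j + ((j:ℤ) - n) + adLen n j - 1)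
        - tphi (adStart n j + ((j:ℤ) - n) - 1) := by
    intro j _
    rw [Finset.sum_image (by intro a _ b _ h; simpa using (congrArg Prod.fst h))]
    rw [Finset.sum_congr rfl (fun i (_ : i ∈ Finset.range (adLen n j)) => congrArg twt
      (show (adStart n j + (i:ℤ), (j:ℤ) - n).1 + (adStart n j + (i:ℤ), (j:ℤ) - n).2
          = (adStart n j + ((j:ℤ) - n)) + i by simp only; ring))]
    rw [sum_range_twt]
  rw [Finset.sum_congr rfl hrow]
  rw [show 2*n = n + n by ring, Finset.sum_range_add]
  have h1 : ∀ j ∈ Finset.range n,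
      tphi (adStart n j + ((j:ℤ) - n) + adLen n j - 1) - tphi (adStart n j + ((j:ℤ) - n) - 1)
      = tphi (2*(j:ℤ) - n) - tphi (-(n:ℤ) - 2) := by
    intro j hj
    simp only [Finset.mem_range] at hj
    unfold adStart adLen
    rw [if_pos hj, if_pos hj]
    rw [show -((j:ℤ)+1) + ((j:ℤ) - n) + ((2*j+2 : ℕ) : ℤ) - 1 = 2*(j:ℤ) - n by push_cast; ring,
        show -((j:ℤ)+1) + ((j:ℤ) - n) - 1 = -(n:ℤ) - 2 by ring]
  have h2 : ∀ i ∈ Finset.range n,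
      tphi (adStart n (n+i) + (((n+i : ℕ):ℤ) - n) + adLen n (n+i) - 1)
        - tphi (adStart n (n+i) + (((n+i:ℕ):ℤ) - n) - 1)
      = tphi ((n:ℤ) - 1) - tphi (2*(i:ℤ) - n - 1) := by
    intro i hi
    simp only [Finset.mem_range] at hi
    unfold adStart adLen
    rw [if_neg (by omega), if_neg (by omega)]
    rw [show ((n+i:ℕ):ℤ) - 2*n + (((n+i:ℕ):ℤ) - n) + ((2*(2*n - (n+i)) : ℕ) : ℤ) - 1 = (n:ℤ) - 1 by
          push_cast [Nat.sub_add_eq]; omega,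
        show ((n+i:ℕ):ℤ) - 2*n + (((n+i:ℕ):ℤ) - n) - 1 = 2*(i:ℤ) - n - 1 by push_cast; ring]
  rw [Finset.sum_congr rfl h1, Finset.sum_congr rfl h2]
  rw [Finset.sum_sub_distrib, Finset.sum_sub_distrib, Finset.sum_const, Finset.sum_const,
      Finset.card_range]
  have h3 : ∀ j ∈ Finset.range n, tphi (2*(j:ℤ) - n) - tphi (2*(j:ℤ) - n - 1) = twt (2*(j:ℤ) - n) := by
    intro j _
    have := tphi_step (2*(j:ℤ) - n)
    omega
  have h4 : (∑ j ∈ Finset.range n, tphi (2*(j:ℤ) - n)) - ∑ i ∈ Finset.range n, tphi (2*(i:ℤ) - n - 1)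
      = ∑ j ∈ Finset.range n, twt (2*(j:ℤ) - n) := by
    rw [← Finset.sum_sub_distrib, Finset.sum_congr rfl h3]
  simp only [nsmul_eq_mul, mul_sub]
  linarith [h4]

lemma sum_adF_ne (n : ℕ) (hn : 1 ≤ n) : ∑ p ∈ adF n, twt (p.1 + p.2) ≠ 0 := by
  rw [sum_adF]
  rw [Finset.sum_congr rfl (fun j (_ : j ∈ Finset.range n) =>
    congrArg twt (show 2*(j:ℤ) - n = 2*(j:ℤ) + (-(n:ℤ)) by ring))]
  rw [sum_twt_two]
  have h3 : n % 3 = 0 ∨ n % 3 = 1 ∨ n % 3 = 2 := by omega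
  rcases h3 with h | h | h
  · have e1 : tphi ((n:ℤ)-1) = 0 := by unfold tphi; split_ifs <;> omega
    have e2 : tphi (-(n:ℤ)-2) = 2 := by unfold tphi; split_ifs <;> omega
    rw [if_pos h, e1, e2]; ring_nf; omega
  · have e1 : tphi ((n:ℤ)-1) = 1 := by unfold tphi; split_ifs <;> omega
    have e2 : tphi (-(n:ℤ)-2) = 1 := by unfold tphi; split_ifs <;> omega
    have e3 : twt (-(n:ℤ)) = -2 := by unfold twt; split_ifs <;> omega
    rw [if_neg (by omega), if_pos h, e1, e2, e3]; ring_nf; omega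
  · have e1 : tphi ((n:ℤ)-1) = 2 := by unfold tphi; split_ifs <;> omega
    have e2 : tphi (-(n:ℤ)-2) = 0 := by unfold tphi; split_ifs <;> omega
    have e3 : twt (-(n:ℤ)) = 1 := by unfold twt; split_ifs <;> omega
    have e4 : twt (-(n:ℤ)+2) = 1 := by unfold twt; split_ifs <;> omega
    rw [if_neg (by omega), if_neg (by omega), e1, e2, e3, e4]; ring_nf; omega

theorem aztecDiamond_no_180_cover (n : ℕ) (hn : 1 ≤ n) :
    ¬ ∃ T : Set (Set (ℤ × ℤ)), IsTilingBy Is180Tromino T (aztecDiamond n) := by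
  classical
  rintro ⟨T, hP, hdisj, hcup⟩
  have hcoe : (↑(adF n) : Set (ℤ × ℤ)) = aztecDiamond n :=
    Set.ext fun p => by rw [Finset.mem_coe, mem_adF]
  have hRfin : (aztecDiamond n).Finite := hcoe ▸ (adF n).finite_toSet
  have hsub : ∀ t ∈ T, t ⊆ aztecDiamond n := fun t ht => hcup ▸ Set.subset_sUnion_of_mem ht
  have hTfin : T.Finite := Set.Finite.subset hRfin.finite_subsets (fun t ht => hsub t ht)
  set FT := hTfin.toFinset with hFT
  set g : Set (ℤ × ℤ) → Finset (ℤ × ℤ) := fun s => (adF n).filter (· ∈ s) with hg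
  have hmemg : ∀ s, ∀ p, p ∈ g s ↔ (p ∈ adF n ∧ p ∈ s) := by
    intro s p; simp [hg]
  have key : adF n = FT.biUnion g := by
    ext p
    simp only [Finset.mem_biUnion, hTfin.mem_toFinset, hmemg]
    constructor
    · intro hp
      have : p ∈ ⋃₀ T := by rw [hcup, ← mem_adF]; exact hp
      obtain ⟨t, ht, hpt⟩ := this
      exact ⟨t, hTfin.mem_toFinset.2 ht, hp, hpt⟩
    · rintro ⟨t, ht, hp, -⟩; exact hp
  have hgd : Set.PairwiseDisjoint ↑FT g := by
    intro t1 h1 t2 h2 hne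
    show Disjoint (g t1) (g t2)
    refine Finset.disjoint_left.2 ?_
    intro p hp1 hp2
    rw [hmemg] at hp1 hp2
    have h1' : t1 ∈ T := by simpa [hFT] using h1
    have h2' : t2 ∈ T := by simpa [hFT] using h2
    exact Set.disjoint_left.1 (hdisj h1' h2' hne) hp1.2 hp2.2
  have htile : ∀ t ∈ FT, ∑ p ∈ g t, twt (p.1 + p.2) = 0 := by
    intro t ht
    have htT : t ∈ T := hTfin.mem_toFinset.1 ht
    obtain ⟨x, y, hxy | hxy⟩ := hP t htT
    · have hgt : g t = ({(x,y), (x,y+1), (x+1,y+1)} : Finset (ℤ × ℤ)) := by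
        ext p
        rw [hmemg]
        simp only [hxy, Set.mem_insert_iff, Set.mem_singleton_iff,
          Finset.mem_insert, Finset.mem_singleton]
        constructor
        · rintro ⟨-, h⟩; exact h
        · intro h
          refine ⟨(mem_adF n p).2 (hsub t htT ?_), h⟩
          rw [hxy]; simpa using h
      rw [hgt, Finset.sum_insert (by simp [Prod.ext_iff]),
        Finset.sum_insert (by simp [Prod.ext_iff]), Finset.sum_singleton]
      simp only
      rw [show x + (y+1) = (x+y)+1 by ring, show (x+1) + (y+1) = (x+y)+2 by ring]
      linarith [twt3 (x+y)]
    · have hgt : g t = ({(x,y), (x+1,y), (x+1,y+1)} : Finset (ℤ × ℤ)) := by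
        ext p
        rw [hmemg]
        simp only [hxy, Set.mem_insert_iff, Set.mem_singleton_iff,
          Finset.mem_insert, Finset.mem_singleton]
        constructor
        · rintro ⟨-, h⟩; exact h
        · intro h
          refine ⟨(mem_adF n p).2 (hsub t htT ?_), h⟩
          rw [hxy]; simpa using h
      rw [hgt, Finset.sum_insert (by simp [Prod.ext_iff]),
        Finset.sum_insert (by simp [Prod.ext_iff]), Finset.sum_singleton]
      simp only
      rw [show (x+1) + y = (x+y)+1 by ring, show (x+1) + (y+1) = (x+y)+2 by ring]
      linarith [twt3 (x+y)]
  have h0 : ∑ p ∈ adF n, twt (p.1 + p.2) = 0 := by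
    rw [key, Finset.sum_biUnion hgd]
    exact Finset.sum_eq_zero htile
  exact sum_adF_ne n hn h0
end

section
/- A finite region R admits a 180-cover (a partition into right-oriented 180-trominoes) if and only if the intersection graph I_R has an independent set of size |R|/3. -/
section Helpers

lemma adj_diff {R : Set (ℤ × ℤ)} {p q : ℤ × ℤ} (h : (regionGraph R).Adj p q) :
    p ∈ R ∧ q ∈ R ∧ ¬(p.1 = q.1 ∧ p.2 = q.2) ∧
    ((q.1 = p.1 + 1 ∧ q.2 = p.2) ∨ (q.1 = p.1 - 1 ∧ q.2 = p.2) ∨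
     (q.1 = p.1 ∧ q.2 = p.2 + 1) ∨ (q.1 = p.1 ∧ q.2 = p.2 - 1) ∨
     (q.1 = p.1 + 1 ∧ q.2 = p.2 + 1) ∨ (q.1 = p.1 - 1 ∧ q.2 = p.2 - 1)) := by
  rw [regionGraph, SimpleGraph.fromRel_adj] at h
  obtain ⟨hne, h⟩ := h
  have hne' : ¬(p.1 = q.1 ∧ p.2 = q.2) := fun hc => hne (Prod.ext hc.1 hc.2)
  rcases h with ⟨hp, hq, h⟩ | ⟨hq, hp, h⟩ <;> refine ⟨hp, hq, hne', ?_⟩ <;>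
    rcases abs_cases (p.1 - q.1) with ⟨h1, _⟩ | ⟨h1, _⟩ <;>
    rcases abs_cases (p.2 - q.2) with ⟨h2, _⟩ | ⟨h2, _⟩ <;>
    rcases abs_cases (q.1 - p.1) with ⟨h3, _⟩ | ⟨h3, _⟩ <;>
    rcases abs_cases (q.2 - p.2) with ⟨h4, _⟩ | ⟨h4, _⟩ <;> omega

lemma absSumOne {u v : ℤ}
    (h : (u = 1 ∧ v = 0) ∨ (u = -1 ∧ v = 0) ∨ (u = 0 ∧ v = 1) ∨ (u = 0 ∧ v = -1)) :
    |u| + |v| = 1 := by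
  rcases abs_cases u with ⟨h1, _⟩ | ⟨h1, _⟩ <;> rcases abs_cases v with ⟨h2, _⟩ | ⟨h2, _⟩ <;> omega

lemma adj_of {R : Set (ℤ × ℤ)} {x1 y1 x2 y2 : ℤ} (hp : (x1, y1) ∈ R) (hq : (x2, y2) ∈ R)
    (h : (x2 = x1 + 1 ∧ y2 = y1) ∨ (x2 = x1 - 1 ∧ y2 = y1) ∨
     (x2 = x1 ∧ y2 = y1 + 1) ∨ (x2 = x1 ∧ y2 = y1 - 1) ∨
     (x2 = x1 + 1 ∧ y2 = y1 + 1) ∨ (x2 = x1 - 1 ∧ y2 = y1 - 1)) :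
    (regionGraph R).Adj (x1, y1) (x2, y2) := by
  rw [regionGraph, SimpleGraph.fromRel_adj]
  refine ⟨fun he => ?_, ?_⟩
  · rw [Prod.mk.injEq] at he; omega
  · rcases h with ⟨h1, h2⟩ | ⟨h1, h2⟩ | ⟨h1, h2⟩ | ⟨h1, h2⟩ | ⟨h1, h2⟩ | ⟨h1, h2⟩
    · exact Or.inl ⟨hp, hq, Or.inl (absSumOne (by omega))⟩
    · exact Or.inl ⟨hp, hq, Or.inl (absSumOne (by omega))⟩
    · exact Or.inl ⟨hp, hq, Or.inl (absSumOne (by omega))⟩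
    · exact Or.inl ⟨hp, hq, Or.inl (absSumOne (by omega))⟩
    · exact Or.inl ⟨hp, hq, Or.inr ⟨by omega, by omega⟩⟩
    · exact Or.inr ⟨hq, hp, Or.inr ⟨by omega, by omega⟩⟩

lemma tri_tromino {R : Set (ℤ × ℤ)} {t : Finset (ℤ × ℤ)}
    (h : IsTriangle (regionGraph R) t) :
    Is180Tromino (↑t : Set (ℤ × ℤ)) ∧ (↑t : Set (ℤ × ℤ)) ⊆ R := by
  obtain ⟨hcard, hadj⟩ := h
  obtain ⟨a, b, c, hab, hac, hbc, rfl⟩ := Finset.card_eq_three.mp hcard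
  have Hab := adj_diff (hadj a (by simp) b (by simp) hab)
  have Hac := adj_diff (hadj a (by simp) c (by simp) hac)
  have Hbc := adj_diff (hadj b (by simp) c (by simp) hbc)
  constructor
  · obtain ⟨-, -, -, Hab⟩ := Hab
    obtain ⟨-, -, -, Hac⟩ := Hac
    obtain ⟨-, -, hbcne, Hbc⟩ := Hbc
    obtain ⟨a1, a2⟩ := a; obtain ⟨b1, b2⟩ := b; obtain ⟨c1, c2⟩ := c
    dsimp only at Hab Hac Hbc hbcne
    have hco : (↑({(a1, a2), (b1, b2), (c1, c2)} : Finset (ℤ × ℤ)) : Set (ℤ × ℤ))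
        = {(a1, a2), (b1, b2), (c1, c2)} := by simp
    rw [Is180Tromino, hco]
    rcases Hab with ⟨e1, e2⟩ | ⟨e1, e2⟩ | ⟨e1, e2⟩ | ⟨e1, e2⟩ | ⟨e1, e2⟩ | ⟨e1, e2⟩ <;>
    rcases Hac with ⟨f1, f2⟩ | ⟨f1, f2⟩ | ⟨f1, f2⟩ | ⟨f1, f2⟩ | ⟨f1, f2⟩ | ⟨f1, f2⟩ <;>
      first
      | (exfalso; omega)
      | exact ⟨a1, a2, by
          first
          | (left; ext ⟨u, v⟩;
             simp only [Set.mem_insert_iff, Set.mem_singleton_iff, Prod.mk.injEq]; omega)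
          | (right; ext ⟨u, v⟩;
             simp only [Set.mem_insert_iff, Set.mem_singleton_iff, Prod.mk.injEq]; omega)⟩
      | exact ⟨a1 - 1, a2 - 1, by
          first
          | (left; ext ⟨u, v⟩;
             simp only [Set.mem_insert_iff, Set.mem_singleton_iff, Prod.mk.injEq]; omega)
          | (right; ext ⟨u, v⟩;
             simp only [Set.mem_insert_iff, Set.mem_singleton_iff, Prod.mk.injEq]; omega)⟩
      | exact ⟨a1, a2 - 1, by
          first
          | (left; ext ⟨u, v⟩;
             simp only [Set.mem_insert_iff, Set.mem_singleton_iff, Prod.mk.injEq]; omega)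
          | (right; ext ⟨u, v⟩;
             simp only [Set.mem_insert_iff, Set.mem_singleton_iff, Prod.mk.injEq]; omega)⟩
      | exact ⟨a1 - 1, a2, by
          first
          | (left; ext ⟨u, v⟩;
             simp only [Set.mem_insert_iff, Set.mem_singleton_iff, Prod.mk.injEq]; omega)
          | (right; ext ⟨u, v⟩;
             simp only [Set.mem_insert_iff, Set.mem_singleton_iff, Prod.mk.injEq]; omega)⟩
  · intro p hp
    simp only [Finset.coe_insert, Set.mem_insert_iff, Finset.coe_singleton,
      Set.mem_singleton_iff] at hp
    rcases hp with rfl | rfl | rfl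
    exacts [Hab.1, Hab.2.1, Hac.2.1]

lemma tromino_tri {R : Set (ℤ × ℤ)} {s : Set (ℤ × ℤ)} (h : Is180Tromino s) (hs : s ⊆ R) :
    ∃ ft : Finset (ℤ × ℤ), IsTriangle (regionGraph R) ft ∧ (↑ft : Set (ℤ × ℤ)) = s := by
  obtain ⟨x, y, h | h⟩ := h
  · refine ⟨{(x, y), (x, y + 1), (x + 1, y + 1)},
      ⟨Finset.card_eq_three.mpr ⟨(x, y), (x, y + 1), (x + 1, y + 1),
        fun hc => by injection hc with u v; omega,
        fun hc => by injection hc with u v; omega,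
        fun hc => by injection hc with u v; omega, rfl⟩, ?_⟩, by rw [h]; simp⟩
    intro u hu v hv huv
    have m1 : (x, y) ∈ s := by rw [h]; simp
    have m2 : (x, y + 1) ∈ s := by rw [h]; simp
    have m3 : (x + 1, y + 1) ∈ s := by rw [h]; simp
    simp only [Finset.mem_insert, Finset.mem_singleton] at hu hv
    rcases hu with rfl | rfl | rfl <;> rcases hv with rfl | rfl | rfl <;>
      first
      | exact absurd rfl huv
      | exact adj_of (hs m1) (hs m2) (by omega)
      | exact adj_of (hs m1) (hs m3) (by omega)
      | exact adj_of (hs m2) (hs m1) (by omega)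
      | exact adj_of (hs m2) (hs m3) (by omega)
      | exact adj_of (hs m3) (hs m1) (by omega)
      | exact adj_of (hs m3) (hs m2) (by omega)
  · refine ⟨{(x, y), (x + 1, y), (x + 1, y + 1)},
      ⟨Finset.card_eq_three.mpr ⟨(x, y), (x + 1, y), (x + 1, y + 1),
        fun hc => by injection hc with u v; omega,
        fun hc => by injection hc with u v; omega,
        fun hc => by injection hc with u v; omega, rfl⟩, ?_⟩, by rw [h]; simp⟩
    intro u hu v hv huv
    have m1 : (x, y) ∈ s := by rw [h]; simp
    have m2 : (x + 1, y) ∈ s := by rw [h]; simp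
    have m3 : (x + 1, y + 1) ∈ s := by rw [h]; simp
    simp only [Finset.mem_insert, Finset.mem_singleton] at hu hv
    rcases hu with rfl | rfl | rfl <;> rcases hv with rfl | rfl | rfl <;>
      first
      | exact absurd rfl huv
      | exact adj_of (hs m1) (hs m2) (by omega)
      | exact adj_of (hs m1) (hs m3) (by omega)
      | exact adj_of (hs m2) (hs m1) (by omega)
      | exact adj_of (hs m2) (hs m3) (by omega)
      | exact adj_of (hs m3) (hs m1) (by omega)
      | exact adj_of (hs m3) (hs m2) (by omega)

lemma ncard_sUnion_three : ∀ (T : Set (Set (ℤ × ℤ))), T.Finite →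
    T.PairwiseDisjoint id → (∀ t ∈ T, t.ncard = 3 ∧ t.Finite) →
    (⋃₀ T).ncard = 3 * T.ncard := by
  intro T hT
  refine Set.Finite.induction_on
    (motive := fun S _ => S.PairwiseDisjoint id → (∀ t ∈ S, t.ncard = 3 ∧ t.Finite) →
      (⋃₀ S).ncard = 3 * S.ncard) T hT (by simp) ?_
  intro a s has hsfin ih hd h3
  have hds : Disjoint a (⋃₀ s) := by
    rw [Set.disjoint_sUnion_right]
    intro t ht
    exact hd (Set.mem_insert _ _) (Set.mem_insert_of_mem _ ht) (fun he => has (he ▸ ht))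
  have hUfin : (⋃₀ s).Finite :=
    Set.Finite.sUnion hsfin (fun t ht => (h3 t (Set.mem_insert_of_mem _ ht)).2)
  rw [Set.sUnion_insert, Set.ncard_union_eq hds (h3 a (Set.mem_insert _ _)).2 hUfin,
    ih (hd.subset (Set.subset_insert _ _)) (fun t ht => h3 t (Set.mem_insert_of_mem _ ht)),
    Set.ncard_insert_of_notMem has hsfin, (h3 a (Set.mem_insert _ _)).1]
  ring

end Helpers

theorem has_180_cover_iff_indepSet (R : Set (ℤ × ℤ)) (hR : R.Finite) :
    (∃ T : Set (Set (ℤ × ℤ)), IsTilingBy Is180Tromino T R) ↔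
    ∃ S : Set {t : Finset (ℤ × ℤ) // IsTriangle (regionGraph R) t},
      IsIndepSet (intersectionGraph R) S ∧ 3 * S.ncard = R.ncard := by
  have hinj : Function.Injective
      (fun s : {t : Finset (ℤ × ℤ) // IsTriangle (regionGraph R) t} =>
        (↑(s.val) : Set (ℤ × ℤ))) :=
    fun s₁ s₂ h => Subtype.ext (Finset.coe_injective h)
  constructor
  · rintro ⟨T, hP, hdisj, hU⟩
    have hTsub : ∀ t ∈ T, t ⊆ R := fun t ht => hU ▸ Set.subset_sUnion_of_mem ht
    have hTfin : T.Finite := hR.finite_subsets.subset (fun t ht => hTsub t ht)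
    set S : Set {t : Finset (ℤ × ℤ) // IsTriangle (regionGraph R) t} :=
      {s | (↑(s.val) : Set (ℤ × ℤ)) ∈ T} with hSdef
    have hTim : T = (fun s : {t : Finset (ℤ × ℤ) // IsTriangle (regionGraph R) t} =>
        (↑(s.val) : Set (ℤ × ℤ))) '' S := by
      ext u
      constructor
      · intro hu
        obtain ⟨ft, htri, hco⟩ := tromino_tri (hP u hu) (hTsub u hu)
        exact ⟨⟨ft, htri⟩, by simpa [hSdef, hco] using hu, hco⟩
      · rintro ⟨s, hs, rfl⟩
        exact hs
    refine ⟨S, ?_, ?_⟩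
    · intro s₁ h1 s₂ h2 hne hadj
      rw [intersectionGraph, SimpleGraph.fromRel_adj] at hadj
      obtain ⟨-, hint⟩ := hadj
      have hint' : ((s₁.val : Finset (ℤ × ℤ)) ∩ (s₂.val : Finset (ℤ × ℤ))).Nonempty := by
        rcases hint with h | h
        · exact h
        · rwa [Finset.inter_comm] at h
      obtain ⟨p, hp⟩ := hint'
      rw [Finset.mem_inter] at hp
      have hnev : (↑(s₁.val) : Set (ℤ × ℤ)) ≠ (↑(s₂.val) : Set (ℤ × ℤ)) := fun he => hne (hinj he)
      have := hdisj h1 h2 hnev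
      exact Set.disjoint_left.mp this hp.1 hp.2
    · have h3 : ∀ t ∈ T, t.ncard = 3 ∧ t.Finite := by
        intro t ht
        obtain ⟨ft, htri, hco⟩ := tromino_tri (hP t ht) (hTsub t ht)
        refine ⟨?_, hR.subset (hTsub t ht)⟩
        rw [← hco, Set.ncard_coe_finset, htri.1]
      have := ncard_sUnion_three T hTfin hdisj h3
      rw [hU] at this
      rw [this, hTim, Set.ncard_image_of_injective _ hinj]
  · rintro ⟨S, hind, hcard⟩
    set T : Set (Set (ℤ × ℤ)) :=
      (fun s : {t : Finset (ℤ × ℤ) // IsTriangle (regionGraph R) t} =>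
        (↑(s.val) : Set (ℤ × ℤ))) '' S with hTdef
    have hP : ∀ t ∈ T, Is180Tromino t := by
      rintro _ ⟨s, hs, rfl⟩
      exact (tri_tromino s.2).1
    have hTsub : ∀ t ∈ T, t ⊆ R := by
      rintro _ ⟨s, hs, rfl⟩
      exact (tri_tromino s.2).2
    have hTfin : T.Finite := hR.finite_subsets.subset (fun t ht => hTsub t ht)
    have hSfin : S.Finite := Set.Finite.of_finite_image (hTdef ▸ hTfin) (hinj.injOn)
    have hdisj : T.PairwiseDisjoint id := by
      rintro _ ⟨s₁, hs1, rfl⟩ _ ⟨s₂, hs2, rfl⟩ hne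
      have hne' : s₁ ≠ s₂ := fun h => hne (by rw [h])
      have hnadj := hind hs1 hs2 hne'
      rw [intersectionGraph, SimpleGraph.fromRel_adj] at hnadj
      have hempty : ¬((s₁.val : Finset (ℤ × ℤ)) ∩ (s₂.val : Finset (ℤ × ℤ))).Nonempty :=
        fun hn => hnadj ⟨hne', Or.inl hn⟩
      simp only [Function.onFun, id_eq]
      rw [Set.disjoint_left]
      intro p hp1 hp2
      exact hempty ⟨p, Finset.mem_inter.mpr ⟨hp1, hp2⟩⟩
    have h3 : ∀ t ∈ T, t.ncard = 3 ∧ t.Finite := by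
      rintro _ ⟨s, hs, rfl⟩
      exact ⟨by rw [Set.ncard_coe_finset, s.2.1], Finset.finite_toSet _⟩
    have hUcard : (⋃₀ T).ncard = R.ncard := by
      rw [ncard_sUnion_three T hTfin hdisj h3, hTdef,
        Set.ncard_image_of_injective _ hinj, hcard]
    have hUsub : ⋃₀ T ⊆ R := Set.sUnion_subset hTsub
    exact ⟨T, hP, hdisj, Set.eq_of_subset_of_ncard_le hUsub hUcard.ge hR⟩
end

section
/- If G is the graph representation of a lattice region R, has a number of vertices divisible by 3, and is not detachable, then G is a tree (acyclic). -/
/-- The graph representation of a region: vertices are the cells, edges between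
cells at L¹-distance 1. -/
def graphRep (R : Set (ℤ × ℤ)) : SimpleGraph R :=
  SimpleGraph.fromRel (fun p q =>
    |(p : ℤ × ℤ).1 - (q : ℤ × ℤ).1| + |(p : ℤ × ℤ).2 - (q : ℤ × ℤ).2| = 1)

/-- A connected graph is detachable if its vertex set splits into two nonempty parts,
each inducing a connected subgraph with vertex count divisible by 3. -/
def Detachable {V : Type*} (G : SimpleGraph V) : Prop :=
  ∃ V₁ V₂ : Set V, Disjoint V₁ V₂ ∧ V₁ ∪ V₂ = Set.univ ∧
    V₁.Nonempty ∧ V₂.Nonempty ∧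
    (G.induce V₁).Connected ∧ (G.induce V₂).Connected ∧
    3 ∣ V₁.ncard ∧ 3 ∣ V₂.ncard

namespace DetachHelper
open SimpleGraph

variable {V : Type*} {G : SimpleGraph V}

lemma getVert_mem_support {u v : V} (w : G.Walk u v) (i : ℕ) : w.getVert i ∈ w.support := by
  induction w generalizing i with
  | nil => simp [Walk.support_nil]
  | cons h p ih =>
    cases i with
    | zero => simp [Walk.getVert_zero]
    | succ n =>
      rw [Walk.getVert_cons_succ]
      simp only [Walk.support_cons, List.mem_cons]
      exact Or.inr (ih n)

lemma IsPath.getVert_inj {u v : V} {w : G.Walk u v} (hw : w.IsPath) :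
    ∀ i j, i ≤ w.length → j ≤ w.length → w.getVert i = w.getVert j → i = j := by
  induction w with
  | nil => intro i j hi hj _; simp at hi hj; omega
  | cons h p ih =>
    intro i j hi hj heq
    rw [Walk.cons_isPath_iff] at hw
    obtain ⟨hp, hu⟩ := hw
    cases i with
    | zero => cases j with
      | zero => rfl
      | succ m =>
        exfalso
        rw [Walk.getVert_zero, Walk.getVert_cons_succ] at heq
        exact hu (heq ▸ getVert_mem_support p m)
    | succ n => cases j with
      | zero =>
        exfalso
        rw [Walk.getVert_zero, Walk.getVert_cons_succ] at heq
        exact hu (heq.symm ▸ getVert_mem_support p n)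
      | succ m =>
        rw [Walk.getVert_cons_succ, Walk.getVert_cons_succ] at heq
        simp only [Walk.length_cons] at hi hj
        have := ih hp n m (by omega) (by omega) heq
        omega

lemma reach_induce {s : Set V} {a b : V} (w : G.Walk a b) (hsup : ∀ v ∈ w.support, v ∈ s)
    (ha : a ∈ s) (hb : b ∈ s) : (G.induce s).Reachable ⟨a, ha⟩ ⟨b, hb⟩ := by
  induction w with
  | nil => exact Reachable.refl _
  | @cons a c b h p ih =>
    have hc : c ∈ s := hsup c (by simp [Walk.support_cons])
    have hsup' : ∀ v ∈ p.support, v ∈ s := fun v hv =>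
      hsup v (by simp only [Walk.support_cons, List.mem_cons]; exact Or.inr hv)
    have hadj : (G.induce s).Adj ⟨a, ha⟩ ⟨c, hc⟩ := h
    exact (hadj.reachable).trans (ih hsup' hc hb)

lemma induce_connected_of_walks {s : Set V} (x0 : V) (hx0 : x0 ∈ s)
    (h : ∀ u ∈ s, ∃ w : G.Walk u x0, ∀ v ∈ w.support, v ∈ s) : (G.induce s).Connected := by
  rw [connected_iff]
  refine ⟨?_, ⟨⟨x0, hx0⟩⟩⟩
  rintro ⟨u, hu⟩ ⟨v, hv⟩
  obtain ⟨wu, hwu⟩ := h u hu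
  obtain ⟨wv, hwv⟩ := h v hv
  exact (reach_induce wu hwu hu hx0).trans (reach_induce wv hwv hv hx0).symm

/-- The set of vertices reachable from `q.getVert i` by walks avoiding
`q.getVert t` for all `t < i`. -/
def S {x y : V} (q : G.Walk x y) (i : ℕ) : Set V :=
  {u | ∃ w : G.Walk (q.getVert i) u, ∀ t, t < i → q.getVert t ∉ w.support}

section SLemmas

variable {x y : V} {q : G.Walk x y}

lemma not_mem_S {i t : ℕ} (ht : t < i) : q.getVert t ∉ S q i := by
  rintro ⟨w, hw⟩
  exact hw t ht w.end_mem_support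

lemma mem_S_self (hq : q.IsPath) {i : ℕ} (hi : i ≤ q.length) : q.getVert i ∈ S q i := by
  refine ⟨Walk.nil, fun t ht hmem => ?_⟩
  rw [Walk.support_nil, List.mem_singleton] at hmem
  have := IsPath.getVert_inj hq t i (by omega) hi hmem
  omega

/-- A walk along a segment of `q`. -/
lemma seg_walk {a b : ℕ} (hab : a ≤ b) (hbk : b ≤ q.length) :
    ∃ w : G.Walk (q.getVert a) (q.getVert b),
      ∀ v ∈ w.support, ∃ s, a ≤ s ∧ s ≤ b ∧ v = q.getVert s := by
  induction b, hab using Nat.le_induction with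
  | base =>
    refine ⟨Walk.nil, fun v hv => ?_⟩
    rw [Walk.support_nil, List.mem_singleton] at hv
    exact ⟨a, le_refl a, le_refl a, hv⟩
  | succ n hn ih =>
    obtain ⟨w, hw⟩ := ih (by omega)
    have hadj : G.Adj (q.getVert n) (q.getVert (n + 1)) := q.adj_getVert_succ (by omega)
    refine ⟨w.concat hadj, fun v hv => ?_⟩
    rw [Walk.support_concat, List.mem_append, List.mem_singleton] at hv
    rcases hv with hv | hv
    · obtain ⟨s, h1, h2, h3⟩ := hw v hv
      exact ⟨s, h1, by omega, h3⟩
    · exact ⟨n + 1, by omega, le_refl _, hv⟩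

lemma S_subset (hq : q.IsPath) {i j : ℕ} (hij : i ≤ j) (hjk : j ≤ q.length) : S q j ⊆ S q i := by
  rintro u ⟨w, hw⟩
  obtain ⟨wseg, hwseg⟩ := seg_walk (q := q) hij hjk
  refine ⟨wseg.append w, fun t ht hmem => ?_⟩
  rw [Walk.mem_support_append_iff] at hmem
  rcases hmem with hmem | hmem
  · obtain ⟨s, h1, h2, h3⟩ := hwseg _ hmem
    have := IsPath.getVert_inj hq t s (by omega) (by omega) h3
    omega
  · exact hw t (by omega) hmem

lemma S_closure [DecidableEq V] {i : ℕ} {u : V} (hu : u ∈ S q i) :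
    ∃ w : G.Walk (q.getVert i) u, (∀ t, t < i → q.getVert t ∉ w.support) ∧
      ∀ v ∈ w.support, v ∈ S q i := by
  obtain ⟨w, hw⟩ := hu
  refine ⟨w, hw, fun v hv => ⟨w.takeUntil v hv, fun t ht hmem => ?_⟩⟩
  exact hw t ht (Walk.support_takeUntil_subset w hv hmem)

lemma S_boundary {i : ℕ} {u v : V} (hu : u ∉ S q i) (hv : v ∈ S q i) (hadj : G.Adj v u) :
    ∃ t, t < i ∧ u = q.getVert t := by
  by_contra hcon
  push_neg at hcon
  obtain ⟨w, hw⟩ := hv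
  refine hu ⟨w.concat hadj, fun t ht hmem => ?_⟩
  rw [Walk.support_concat, List.mem_append, List.mem_singleton] at hmem
  rcases hmem with hmem | hmem
  · exact hw t ht hmem
  · exact hcon t ht hmem.symm

/-- Every vertex outside `S q i` (for `i ≥ 1`) can reach `x = q.getVert 0`
by a walk avoiding `S q i`. -/
lemma S_compl_walk (hconn : G.Connected) {i : ℕ} (hi1 : 1 ≤ i) (hik : i ≤ q.length)
    {u : V} (hu : u ∉ S q i) :
    ∃ w : G.Walk u (q.getVert 0), ∀ v ∈ w.support, v ∉ S q i := by
  obtain ⟨w0⟩ := hconn.preconnected u (q.getVert 0)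
  have aux : ∀ (u z : V) (w : G.Walk u z), z = q.getVert 0 → u ∉ S q i →
      ∃ w' : G.Walk u (q.getVert 0), ∀ v ∈ w'.support, v ∉ S q i := by
    intro u z w
    induction w with
    | nil =>
      rintro rfl _
      refine ⟨Walk.nil, fun v hv => ?_⟩
      rw [Walk.support_nil, List.mem_singleton] at hv
      subst hv
      exact not_mem_S (by omega)
    | @cons u b _ hadj w' ih =>
      intro hz hu
      subst hz
      by_cases hb : b ∈ S q i
      · obtain ⟨t, ht, rfl⟩ := S_boundary hu hb hadj.symm
        obtain ⟨wseg, hws⟩ := seg_walk (q := q) (Nat.zero_le t) (by omega)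
        refine ⟨wseg.reverse, fun v hv => ?_⟩
        rw [Walk.support_reverse, List.mem_reverse] at hv
        obtain ⟨s, _, h2, rfl⟩ := hws v hv
        exact not_mem_S (by omega)
      · obtain ⟨w'', hw''⟩ := ih rfl hb
        refine ⟨Walk.cons hadj w'', fun v hv => ?_⟩
        rw [Walk.support_cons, List.mem_cons] at hv
        rcases hv with rfl | hv
        · exact hu
        · exact hw'' v hv
  exact aux u (q.getVert 0) w0 rfl hu

/-- Every vertex of `S q i \ S q j` can reach `q.getVert i` within `S q i \ S q j`. -/
lemma S_diff_walk [DecidableEq V] (hq : q.IsPath) {i j : ℕ} (hij : i < j) (hjk : j ≤ q.length)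
    {u : V} (hui : u ∈ S q i) (huj : u ∉ S q j) :
    ∃ w : G.Walk u (q.getVert i), ∀ v ∈ w.support, v ∈ S q i ∧ v ∉ S q j := by
  obtain ⟨w, hw, _⟩ := S_closure hui
  have aux : ∀ (u z : V) (w : G.Walk u z), z = q.getVert i →
      (∀ t, t < i → q.getVert t ∉ w.support) → u ∉ S q j →
      ∃ w' : G.Walk u (q.getVert i), ∀ v ∈ w'.support, v ∈ S q i ∧ v ∉ S q j := by
    intro u z w
    induction w with
    | nil =>
      rintro rfl _ _
      refine ⟨Walk.nil, fun v hv => ?_⟩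
      rw [Walk.support_nil, List.mem_singleton] at hv
      subst hv
      exact ⟨mem_S_self hq (by omega), not_mem_S hij⟩
    | @cons u b _ hadj w' ih =>
      intro hz havoid huj
      subst hz
      have havoid' : ∀ t, t < i → q.getVert t ∉ w'.support := fun t ht hm =>
        havoid t ht (by rw [Walk.support_cons, List.mem_cons]; exact Or.inr hm)
      have huSi : u ∈ S q i := by
        refine ⟨(Walk.cons hadj w').reverse, fun t ht hmem => ?_⟩
        rw [Walk.support_reverse, List.mem_reverse] at hmem
        exact havoid t ht hmem
      by_cases hb : b ∈ S q j
      · obtain ⟨t, ht, rfl⟩ := S_boundary huj hb hadj.symm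
        have hti : i ≤ t := by
          by_contra h'
          exact havoid t (by omega) (Walk.start_mem_support _)
        obtain ⟨wseg, hws⟩ := seg_walk (q := q) hti (by omega)
        refine ⟨wseg.reverse, fun v hv => ?_⟩
        rw [Walk.support_reverse, List.mem_reverse] at hv
        obtain ⟨s, h1, h2, rfl⟩ := hws v hv
        exact ⟨S_subset hq h1 (by omega) (mem_S_self hq (by omega)), not_mem_S (by omega)⟩
      · obtain ⟨w'', hw''⟩ := ih rfl havoid' hb
        refine ⟨Walk.cons hadj w'', fun v hv => ?_⟩
        rw [Walk.support_cons, List.mem_cons] at hv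
        rcases hv with rfl | hv
        · exact ⟨huSi, huj⟩
        · exact hw'' v hv
  refine aux u (q.getVert i) w.reverse rfl (fun t ht hmem => ?_) huj
  rw [Walk.support_reverse, List.mem_reverse] at hmem
  exact hw t ht hmem

end SLemmas

lemma detachable_of_cycle [Finite V] (hconn : G.Connected)
    (htf : ∀ a b c : V, G.Adj a b → G.Adj b c → G.Adj c a → False)
    (h3 : 3 ∣ Nat.card V) (hcyc : ¬ G.IsAcyclic) : Detachable G := by
  classical
  rw [SimpleGraph.IsAcyclic] at hcyc
  push_neg at hcyc
  obtain ⟨x, c, hc⟩ := hcyc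
  have hlen3 := hc.three_le_length
  cases c with
  | nil => simp at hlen3
  | @cons _ y _ hadj p =>
    rw [Walk.cons_isCycle_iff] at hc
    have hp : p.IsPath := hc.1
    simp only [Walk.length_cons] at hlen3
    -- exclude length-2 path (triangle)
    have hp3 : 3 ≤ p.length := by
      rcases Nat.lt_or_ge p.length 3 with h | h
      · exfalso
        have h2 : p.length = 2 := by omega
        have a1 : G.Adj y (p.getVert 1) := by
          have := p.adj_getVert_succ (i := 0) (by omega)
          rwa [p.getVert_zero] at this
        have a2 : G.Adj (p.getVert 1) x := by
          have := p.adj_getVert_succ (i := 1) (by omega)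
          rwa [show (1 + 1) = p.length from by omega, p.getVert_length] at this
        exact htf x y (p.getVert 1) hadj a1 a2
      · exact h
    set q : G.Walk x y := p.reverse with hqdef
    have hq : q.IsPath := hp.reverse
    have hk3 : 3 ≤ q.length := by rwa [hqdef, Walk.length_reverse]
    have hq0 : q.getVert 0 = x := q.getVert_zero
    have hqk : q.getVert q.length = y := q.getVert_length
    -- the key case lemmas
    have hfin : ∀ s : Set V, s.Finite := fun s => Set.toFinite s
    have hcardsum : ∀ s : Set V, s.ncard + sᶜ.ncard = Nat.card V := fun s =>
      Set.ncard_add_ncard_compl s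
    -- Case A
    have caseA : ∀ i, 1 ≤ i → i ≤ q.length → 3 ∣ (S q i).ncard → Detachable G := by
      intro i hi1 hik hdvd
      refine ⟨S q i, (S q i)ᶜ, disjoint_compl_right, Set.union_compl_self _,
        ⟨q.getVert i, mem_S_self hq hik⟩, ⟨q.getVert 0, not_mem_S (by omega)⟩, ?_, ?_, hdvd, ?_⟩
      · refine induce_connected_of_walks (q.getVert i) (mem_S_self hq hik) (fun u hu => ?_)
        obtain ⟨w, _, hsup⟩ := S_closure hu
        refine ⟨w.reverse, fun v hv => ?_⟩
        rw [Walk.support_reverse, List.mem_reverse] at hv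
        exact hsup v hv
      · refine induce_connected_of_walks (q.getVert 0) (not_mem_S (by omega)) (fun u hu => ?_)
        exact S_compl_walk hconn hi1 hik hu
      · have := hcardsum (S q i)
        omega
    -- Case B
    have caseB : ∀ i j, 1 ≤ i → i < j → j ≤ q.length →
        (S q i).ncard % 3 = (S q j).ncard % 3 → Detachable G := by
      intro i j hi1 hij hjk hmod
      have hsub := S_subset hq (le_of_lt hij) hjk
      have hle : (S q j).ncard ≤ (S q i).ncard := Set.ncard_le_ncard hsub (hfin _)
      have hdiff : (S q i \ S q j).ncard = (S q i).ncard - (S q j).ncard :=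
        Set.ncard_diff hsub (hfin _)
      refine ⟨S q i \ S q j, (S q i \ S q j)ᶜ, disjoint_compl_right, Set.union_compl_self _,
        ⟨q.getVert i, mem_S_self hq (by omega), not_mem_S hij⟩,
        ⟨q.getVert 0, fun hmem => (not_mem_S (by omega) : q.getVert 0 ∉ S q i) hmem.1⟩,
        ?_, ?_, ?_, ?_⟩
      · refine induce_connected_of_walks (q.getVert i)
          ⟨mem_S_self hq (by omega), not_mem_S hij⟩ (fun u hu => ?_)
        obtain ⟨w, hw⟩ := S_diff_walk hq hij hjk hu.1 hu.2
        exact ⟨w, hw⟩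
      · -- complement = (S q i)ᶜ ∪ S q j, connect everything to x = q.getVert 0
        have hcompl_eq : (S q i \ S q j)ᶜ = (S q i)ᶜ ∪ S q j := by
          ext v; simp [Set.mem_diff, not_and_or, or_comm]; tauto
        have hyk : y ∈ S q j := by
          have := mem_S_self hq (i := q.length) (le_refl _)
          rw [hqk] at this
          exact S_subset hq hjk (le_refl _) this
        have hx0 : q.getVert 0 ∈ (S q i \ S q j)ᶜ := fun hmem =>
          (not_mem_S (by omega) : q.getVert 0 ∉ S q i) hmem.1
        refine induce_connected_of_walks (q.getVert 0) hx0 (fun u hu => ?_)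
        rw [hcompl_eq] at hu
        rcases hu with hu | hu
        · obtain ⟨w, hw⟩ := S_compl_walk hconn hi1 (by omega) hu
          exact ⟨w, fun v hv => by rw [hcompl_eq]; exact Or.inl (hw v hv)⟩
        · -- u ∈ S q j: go to q.getVert j, then to y, then edge y-x
          obtain ⟨w1, _, hsup1⟩ := S_closure hu
          obtain ⟨w2, _, hsup2⟩ := S_closure hyk
          have hxy : G.Adj y (q.getVert 0) := by rw [hq0]; exact hadj.symm
          refine ⟨(w1.reverse.append w2).append (Walk.cons hxy Walk.nil), fun v hv => ?_⟩
          rw [hcompl_eq]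
          rw [Walk.mem_support_append_iff] at hv
          rcases hv with hv | hv
          · rw [Walk.mem_support_append_iff] at hv
            rcases hv with hv | hv
            · rw [Walk.support_reverse, List.mem_reverse] at hv
              exact Or.inr (hsup1 v hv)
            · exact Or.inr (hsup2 v hv)
          · rw [Walk.support_cons, List.mem_cons] at hv
            rcases hv with rfl | hv
            · exact Or.inr hyk
            · rw [Walk.support_nil, List.mem_singleton] at hv
              subst hv
              exact Or.inl (not_mem_S (by omega))
      · omega
      · have := hcardsum (S q i \ S q j)
        omega
    -- pigeonhole on |S 1|, |S 2|, |S 3| mod 3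
    set n1 := (S q 1).ncard % 3 with hn1
    set n2 := (S q 2).ncard % 3 with hn2
    set n3 := (S q 3).ncard % 3 with hn3
    by_cases h1 : n1 = 0
    · exact caseA 1 (by omega) (by omega) (by omega)
    by_cases h2 : n2 = 0
    · exact caseA 2 (by omega) (by omega) (by omega)
    by_cases h3' : n3 = 0
    · exact caseA 3 (by omega) (by omega) (by omega)
    by_cases h12 : n1 = n2
    · exact caseB 1 2 (by omega) (by omega) (by omega) (by omega)
    by_cases h13 : n1 = n3
    · exact caseB 1 3 (by omega) (by omega) (by omega) (by omega)
    · exact caseB 2 3 (by omega) (by omega) (by omega) (by omega)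


lemma parity_aux {x1 y1 x2 y2 : ℤ} (h : |x1 - x2| + |y1 - y2| = 1) :
    (x1 + y1 + x2 + y2) % 2 = 1 := by
  rcases abs_cases (x1 - x2) with ⟨h1, _⟩ | ⟨h1, _⟩ <;>
    rcases abs_cases (y1 - y2) with ⟨h2, _⟩ | ⟨h2, _⟩ <;> omega

lemma adj_parity {R : Set (ℤ × ℤ)} {a b : ↥R} (h : (graphRep R).Adj a b) :
    ((a : ℤ × ℤ).1 + (a : ℤ × ℤ).2 + (b : ℤ × ℤ).1 + (b : ℤ × ℤ).2) % 2 = 1 := by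
  rw [graphRep, SimpleGraph.fromRel_adj] at h
  obtain ⟨-, h | h⟩ := h
  · exact parity_aux h
  · have := parity_aux h
    omega

end DetachHelper

theorem tree_of_not_detachable (R : Set (ℤ × ℤ)) (hR : R.Finite)
    (hconn : (graphRep R).Connected) (h3 : 3 ∣ R.ncard)
    (hnd : ¬ Detachable (graphRep R)) : (graphRep R).IsAcyclic := by
  by_contra hcyc
  have : Finite ↥R := hR.to_subtype
  have htf : ∀ a b c : ↥R, (graphRep R).Adj a b → (graphRep R).Adj b c →
      (graphRep R).Adj c a → False := by
    intro a b c hab hbc hca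
    have p1 := DetachHelper.adj_parity hab
    have p2 := DetachHelper.adj_parity hbc
    have p3 := DetachHelper.adj_parity hca
    omega
  have h3' : 3 ∣ Nat.card ↥R := by rwa [Nat.card_coe_set_eq]
  exact hnd (DetachHelper.detachable_of_cycle hconn htf h3' hcyc)
end

section
/- If a region R admits a tiling by I-trominoes, then the subdivided region R⊞ admits a tiling by 180-trominoes: every translate of a horizontal I-tromino {(0,0),(1,0),(2,0)} or vertical I-tromino {(0,0),(0,1),(0,2)}, after subdividing each cell into four, yields a 2×6 or 6×2 rectangle, and every 2×6 (and 6×2) rectangle can be partitioned into four right-oriented 180-trominoes. -/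
/-- The region obtained by subdividing each cell of `R` into four cells. -/
def subdivide (R : Set (ℤ × ℤ)) : Set (ℤ × ℤ) :=
  ⋃ q ∈ R, ({(2*q.1, 2*q.2), (2*q.1 + 1, 2*q.2),
             (2*q.1, 2*q.2 + 1), (2*q.1 + 1, 2*q.2 + 1)} : Set (ℤ × ℤ))


def trA (x y : ℤ) : Set (ℤ × ℤ) := {(x, y), (x, y+1), (x+1, y+1)}
def trB (x y : ℤ) : Set (ℤ × ℤ) := {(x, y), (x+1, y), (x+1, y+1)}

lemma trA_is {x y : ℤ} : Is180Tromino (trA x y) := ⟨x, y, Or.inl rfl⟩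
lemma trB_is {x y : ℤ} : Is180Tromino (trB x y) := ⟨x, y, Or.inr rfl⟩

lemma subdivide_insert (q : ℤ × ℤ) (R : Set (ℤ × ℤ)) :
    subdivide (insert q R) = ({(2*q.1, 2*q.2), (2*q.1 + 1, 2*q.2),
      (2*q.1, 2*q.2 + 1), (2*q.1 + 1, 2*q.2 + 1)} : Set (ℤ × ℤ)) ∪ subdivide R :=
  Set.biUnion_insert _ _ _

lemma subdivide_singleton (q : ℤ × ℤ) :
    subdivide {q} = ({(2*q.1, 2*q.2), (2*q.1 + 1, 2*q.2),
      (2*q.1, 2*q.2 + 1), (2*q.1 + 1, 2*q.2 + 1)} : Set (ℤ × ℤ)) :=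
  Set.biUnion_singleton _ _

lemma mem_subdivide {R : Set (ℤ × ℤ)} {p : ℤ × ℤ} :
    p ∈ subdivide R ↔ ∃ q ∈ R, p ∈ ({(2*q.1, 2*q.2), (2*q.1 + 1, 2*q.2),
      (2*q.1, 2*q.2 + 1), (2*q.1 + 1, 2*q.2 + 1)} : Set (ℤ × ℤ)) := by
  simp [subdivide]

lemma subdivide_disjoint {s t : Set (ℤ × ℤ)} (h : Disjoint s t) :
    Disjoint (subdivide s) (subdivide t) := by
  rw [Set.disjoint_left] at h ⊢
  intro p hp hp'
  rw [mem_subdivide] at hp hp'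
  obtain ⟨q, hq, hpq⟩ := hp
  obtain ⟨q', hq', hpq'⟩ := hp'
  have : q = q' := by
    simp only [Set.mem_insert_iff, Set.mem_singleton_iff, Prod.ext_iff] at hpq hpq'
    have h1 : q.1 = q'.1 ∧ q.2 = q'.2 := by omega
    exact Prod.ext h1.1 h1.2
  exact h hq (this ▸ hq')

lemma subdivide_sUnion (T : Set (Set (ℤ × ℤ))) :
    subdivide (⋃₀ T) = ⋃ t ∈ T, subdivide t := by
  ext p
  constructor
  · intro hp
    obtain ⟨q, hq, hpq⟩ := mem_subdivide.mp hp
    obtain ⟨t, ht, hqt⟩ := Set.mem_sUnion.mp hq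
    exact Set.mem_iUnion.mpr ⟨t, Set.mem_iUnion.mpr ⟨ht, mem_subdivide.mpr ⟨q, hqt, hpq⟩⟩⟩
  · intro hp
    obtain ⟨t, ht⟩ := Set.mem_iUnion.mp hp
    obtain ⟨ht, hp⟩ := Set.mem_iUnion.mp ht
    obtain ⟨q, hq, hpq⟩ := mem_subdivide.mp hp
    exact mem_subdivide.mpr ⟨q, Set.mem_sUnion.mpr ⟨t, ht, hq⟩, hpq⟩

lemma tile_lemma (t : Set (ℤ × ℤ)) (h : IsITromino t) :
    ∃ S, IsTilingBy Is180Tromino S (subdivide t) := by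
  obtain ⟨x, y, h | h⟩ := h <;> subst h
  · refine ⟨{trA (2*x) (2*y), trB (2*x+1) (2*y), trA (2*x+3) (2*y), trB (2*x+4) (2*y)},
      ?_, ?_, ?_⟩
    · rintro s hs
      simp only [Set.mem_insert_iff, Set.mem_singleton_iff] at hs
      rcases hs with rfl|rfl|rfl|rfl
      exacts [trA_is, trB_is, trA_is, trB_is]
    · intro s hs s' hs' hne
      simp only [Set.mem_insert_iff, Set.mem_singleton_iff] at hs hs'
      rcases hs with rfl|rfl|rfl|rfl <;> rcases hs' with rfl|rfl|rfl|rfl <;>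
        first
        | exact absurd rfl hne
        | (simp only [Function.onFun, id_eq, Set.disjoint_left]
           rintro ⟨a, b⟩ hp hq
           simp only [trA, trB, Set.mem_insert_iff, Set.mem_singleton_iff,
             Prod.mk.injEq] at hp hq
           omega)
    · rw [show ({(x, y), (x+1, y), (x+2, y)} : Set (ℤ × ℤ)) =
        insert (x,y) (insert (x+1,y) {(x+2,y)}) from rfl, subdivide_insert,
        subdivide_insert, subdivide_singleton]
      ext ⟨a, b⟩
      simp only [Set.sUnion_insert, Set.sUnion_singleton, trA, trB, Set.mem_union,
        Set.mem_insert_iff, Set.mem_singleton_iff, Prod.mk.injEq]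
      constructor
      · rintro ((⟨rfl,rfl⟩|⟨rfl,rfl⟩|⟨rfl,rfl⟩)|(⟨rfl,rfl⟩|⟨rfl,rfl⟩|⟨rfl,rfl⟩)|(⟨rfl,rfl⟩|⟨rfl,rfl⟩|⟨rfl,rfl⟩)|(⟨rfl,rfl⟩|⟨rfl,rfl⟩|⟨rfl,rfl⟩)) <;> omega
      · rintro ((⟨rfl,rfl⟩|⟨rfl,rfl⟩|⟨rfl,rfl⟩|⟨rfl,rfl⟩)|(⟨rfl,rfl⟩|⟨rfl,rfl⟩|⟨rfl,rfl⟩|⟨rfl,rfl⟩)|(⟨rfl,rfl⟩|⟨rfl,rfl⟩|⟨rfl,rfl⟩|⟨rfl,rfl⟩)) <;> omega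
  · refine ⟨{trB (2*x) (2*y), trA (2*x) (2*y+1), trB (2*x) (2*y+3), trA (2*x) (2*y+4)},
      ?_, ?_, ?_⟩
    · rintro s hs
      simp only [Set.mem_insert_iff, Set.mem_singleton_iff] at hs
      rcases hs with rfl|rfl|rfl|rfl
      exacts [trB_is, trA_is, trB_is, trA_is]
    · intro s hs s' hs' hne
      simp only [Set.mem_insert_iff, Set.mem_singleton_iff] at hs hs'
      rcases hs with rfl|rfl|rfl|rfl <;> rcases hs' with rfl|rfl|rfl|rfl <;>
        first
        | exact absurd rfl hne
        | (simp only [Function.onFun, id_eq, Set.disjoint_left]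
           rintro ⟨a, b⟩ hp hq
           simp only [trA, trB, Set.mem_insert_iff, Set.mem_singleton_iff,
             Prod.mk.injEq] at hp hq
           omega)
    · rw [show ({(x, y), (x, y+1), (x, y+2)} : Set (ℤ × ℤ)) =
        insert (x,y) (insert (x,y+1) {(x,y+2)}) from rfl, subdivide_insert,
        subdivide_insert, subdivide_singleton]
      ext ⟨a, b⟩
      simp only [Set.sUnion_insert, Set.sUnion_singleton, trA, trB, Set.mem_union,
        Set.mem_insert_iff, Set.mem_singleton_iff, Prod.mk.injEq]
      constructor
      · rintro ((⟨rfl,rfl⟩|⟨rfl,rfl⟩|⟨rfl,rfl⟩)|(⟨rfl,rfl⟩|⟨rfl,rfl⟩|⟨rfl,rfl⟩)|(⟨rfl,rfl⟩|⟨rfl,rfl⟩|⟨rfl,rfl⟩)|(⟨rfl,rfl⟩|⟨rfl,rfl⟩|⟨rfl,rfl⟩)) <;> omega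
      · rintro ((⟨rfl,rfl⟩|⟨rfl,rfl⟩|⟨rfl,rfl⟩|⟨rfl,rfl⟩)|(⟨rfl,rfl⟩|⟨rfl,rfl⟩|⟨rfl,rfl⟩|⟨rfl,rfl⟩)|(⟨rfl,rfl⟩|⟨rfl,rfl⟩|⟨rfl,rfl⟩|⟨rfl,rfl⟩)) <;> omega

open Classical in
noncomputable def pieces (t : Set (ℤ × ℤ)) : Set (Set (ℤ × ℤ)) :=
  if h : IsITromino t then Classical.choose (tile_lemma t h) else ∅

lemma pieces_spec {t : Set (ℤ × ℤ)} (h : IsITromino t) :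
    IsTilingBy Is180Tromino (pieces t) (subdivide t) := by
  unfold pieces
  rw [dif_pos h]
  exact Classical.choose_spec (tile_lemma t h)

theorem subdivide_180_cover_of_ITromino_tiling (R : Set (ℤ × ℤ))
    (T : Set (Set (ℤ × ℤ))) (hT : IsTilingBy IsITromino T R) :
    ∃ T' : Set (Set (ℤ × ℤ)), IsTilingBy Is180Tromino T' (subdivide R) := by
  obtain ⟨hI, hdisj, hcover⟩ := hT
  refine ⟨⋃ t ∈ T, pieces t, ?_, ?_, ?_⟩
  · intro s hs
    simp only [Set.mem_iUnion] at hs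
    obtain ⟨t, ht, hst⟩ := hs
    exact (pieces_spec (hI t ht)).1 s hst
  · intro s hs s' hs' hne
    simp only [Set.mem_iUnion] at hs hs'
    obtain ⟨t, ht, hst⟩ := hs
    obtain ⟨t', ht', hst'⟩ := hs'
    by_cases htt : t = t'
    · subst htt
      exact (pieces_spec (hI t ht)).2.1 hst hst' hne
    · have h1 : s ⊆ subdivide t := by
        rw [← (pieces_spec (hI t ht)).2.2]
        exact Set.subset_sUnion_of_mem hst
      have h2 : s' ⊆ subdivide t' := by
        rw [← (pieces_spec (hI t' ht')).2.2]
        exact Set.subset_sUnion_of_mem hst'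
      have hd : Disjoint (subdivide t) (subdivide t') :=
        subdivide_disjoint (hdisj ht ht' htt)
      exact Set.disjoint_of_subset h1 h2 hd
  · rw [← hcover, subdivide_sUnion]
    ext p
    constructor
    · intro hp
      obtain ⟨s, hs, hps⟩ := Set.mem_sUnion.mp hp
      obtain ⟨t, ht2⟩ := Set.mem_iUnion.mp hs
      obtain ⟨ht, hst⟩ := Set.mem_iUnion.mp ht2
      refine Set.mem_iUnion.mpr ⟨t, Set.mem_iUnion.mpr ⟨ht, ?_⟩⟩
      rw [← (pieces_spec (hI t ht)).2.2]
      exact Set.mem_sUnion.mpr ⟨s, hst, hps⟩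
    · intro hp
      obtain ⟨t, ht2⟩ := Set.mem_iUnion.mp hp
      obtain ⟨ht, hp⟩ := Set.mem_iUnion.mp ht2
      rw [← (pieces_spec (hI t ht)).2.2] at hp
      obtain ⟨s, hst, hps⟩ := Set.mem_sUnion.mp hp
      exact Set.mem_sUnion.mpr ⟨s, Set.mem_iUnion.mpr ⟨t, Set.mem_iUnion.mpr ⟨ht, hst⟩⟩, hps⟩
end

section
/- For every integer k ≥ 1, the Aztec diamond AD(3k) admits an L-tromino tiling, and consequently AD(3k+2) admits an L-tromino tiling (tiling AD(n) for n ≡ 0 mod 3 extends by a border of stairs to a tiling of AD(n+2)). -/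
namespace AzAux

lemma L_ne (x y : ℤ) : IsLTromino ({(x,y),(x+1,y),(x+1,y+1)} : Set (ℤ×ℤ)) := by
  refine ⟨x, y, (x, y+1), by simp, ?_⟩
  ext ⟨a,b⟩; simp [Prod.ext_iff]; try omega

lemma L_nw (x y : ℤ) : IsLTromino ({(x,y),(x+1,y),(x,y+1)} : Set (ℤ×ℤ)) := by
  refine ⟨x, y, (x+1, y+1), by simp, ?_⟩
  ext ⟨a,b⟩; simp [Prod.ext_iff]; try omega

lemma L_se (x y : ℤ) : IsLTromino ({(x,y),(x,y+1),(x+1,y+1)} : Set (ℤ×ℤ)) := by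
  refine ⟨x, y, (x+1, y), by simp, ?_⟩
  ext ⟨a,b⟩; simp [Prod.ext_iff]; try omega

lemma L_sw (x y : ℤ) : IsLTromino ({(x+1,y),(x,y+1),(x+1,y+1)} : Set (ℤ×ℤ)) := by
  refine ⟨x, y, (x, y), by simp, ?_⟩
  ext ⟨a,b⟩; simp [Prod.ext_iff]; try omega

lemma tiling_empty (P : Set (ℤ×ℤ) → Prop) : IsTilingBy P ∅ ∅ := by
  refine ⟨by simp, by simp, by simp⟩

lemma tiling_single {P : Set (ℤ×ℤ) → Prop} {t : Set (ℤ×ℤ)} (h : P t) :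
    IsTilingBy P {t} t := by
  refine ⟨by simpa, Set.pairwiseDisjoint_singleton _ _, by simp⟩

lemma tile_subset {P T R} (h : IsTilingBy P T R) {t} (ht : t ∈ T) : t ⊆ R := by
  rw [← h.2.2]; exact Set.subset_sUnion_of_mem ht

lemma tiling_union {P : Set (ℤ×ℤ) → Prop} {T1 T2 R1 R2}
    (h1 : IsTilingBy P T1 R1) (h2 : IsTilingBy P T2 R2) (hd : Disjoint R1 R2) :
    IsTilingBy P (T1 ∪ T2) (R1 ∪ R2) := by
  refine ⟨?_, ?_, ?_⟩
  · rintro t (ht | ht)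
    exacts [h1.1 t ht, h2.1 t ht]
  · rintro t (ht | ht) s (hs | hs) hne
    · exact h1.2.1 ht hs hne
    · exact hd.mono (tile_subset h1 ht) (tile_subset h2 hs)
    · exact (hd.symm).mono (tile_subset h2 ht) (tile_subset h1 hs)
    · exact h2.2.1 ht hs hne
  · rw [Set.sUnion_union, h1.2.2, h2.2.2]

lemma tiling_congr {P T R R'} (h : IsTilingBy P T R) (hR : R = R') : IsTilingBy P T R' :=
  hR ▸ h


/-- A 2w-wide, 3-tall strip of cells. -/
def strip (x y : ℤ) (w : ℕ) : Set (ℤ×ℤ) :=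
  {p | x ≤ p.1 ∧ p.1 < x + 2*w ∧ y ≤ p.2 ∧ p.2 < y + 3}

lemma rect_tileable (x y : ℤ) : ∃ T, IsTilingBy IsLTromino T (strip x y 1) := by
  refine ⟨{({(x,y),(x+1,y),(x,y+1)} : Set (ℤ×ℤ))} ∪
          {({(x+1,y+1),(x,y+2),(x+1,y+2)} : Set (ℤ×ℤ))}, ?_⟩
  have h2 : ({(x+1,y+1),(x,y+2),(x+1,y+2)} : Set (ℤ×ℤ)) =
      {(x+1,y+1),(x,(y+1)+1),(x+1,(y+1)+1)} := by ring_nf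
  refine tiling_congr (tiling_union (tiling_single (L_nw x y))
    (tiling_single (h2 ▸ L_sw x (y+1))) ?_) ?_
  · rw [Set.disjoint_left]; rintro ⟨a,b⟩ h h'
    simp [Prod.ext_iff] at h h'; omega
  · ext ⟨a,b⟩; simp [strip, Prod.ext_iff]; omega

lemma strip_tileable (w : ℕ) (x y : ℤ) : ∃ T, IsTilingBy IsLTromino T (strip x y w) := by
  induction w with
  | zero =>
    refine ⟨∅, tiling_congr (tiling_empty _) ?_⟩
    ext ⟨a,b⟩; simp [strip]; omega
  | succ n ih =>
    obtain ⟨T1, h1⟩ := ih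
    obtain ⟨T2, h2⟩ := rect_tileable (x + 2*n) y
    refine ⟨T1 ∪ T2, tiling_congr (tiling_union h1 h2 ?_) ?_⟩
    · rw [Set.disjoint_left]; rintro ⟨a,b⟩ h h'
      simp [strip] at h h'; omega
    · ext ⟨a,b⟩; simp [strip]; omega

/-- The 3-row trapezoid: rows y, y+1, y+2 of widths 2m, 2m-2, 2m-4, centered. -/
def trap (m y : ℤ) : Set (ℤ×ℤ) :=
  {p | y ≤ p.2 ∧ p.2 < y + 3 ∧ p.2 - y - m ≤ p.1 ∧ p.1 < m - (p.2 - y)}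

lemma trap_tileable (m y : ℤ) (hm : 4 ≤ m) : ∃ T, IsTilingBy IsLTromino T (trap m y) := by
  have hw : (((m - 4).toNat : ℤ)) = m - 4 := Int.toNat_of_nonneg (by omega)
  obtain ⟨TB, hB⟩ := rect_tileable (-m+2) y
  obtain ⟨TC, hC⟩ := strip_tileable (m-4).toNat (-m+4) y
  obtain ⟨TD, hD⟩ := rect_tileable (m-4) y
  have hA := tiling_single (P := IsLTromino) (L_ne (-m) y)
  have hE := tiling_single (P := IsLTromino) (L_nw (m-2) y)
  have s1 := tiling_union hA hB (by
    rw [Set.disjoint_left]; rintro ⟨a,b⟩ h h'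
    simp [strip, Prod.ext_iff] at h h'; omega)
  have s2 := tiling_union s1 hC (by
    rw [Set.disjoint_left]; rintro ⟨a,b⟩ h h'
    simp [strip, Prod.ext_iff] at h h'; omega)
  have s3 := tiling_union s2 hD (by
    rw [Set.disjoint_left]; rintro ⟨a,b⟩ h h'
    simp [strip, Prod.ext_iff, hw] at h h'; omega)
  have s4 := tiling_union s3 hE (by
    rw [Set.disjoint_left]; rintro ⟨a,b⟩ h h'
    simp [strip, Prod.ext_iff, hw] at h h'; omega)
  refine ⟨_, tiling_congr s4 ?_⟩
  ext ⟨a,b⟩; simp [strip, trap, Prod.ext_iff, hw]; omega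

/-- The upper pyramid: rows y..y+n-1, row at offset r has x ∈ [r-n, n-r). -/
def pyr (n : ℕ) (y : ℤ) : Set (ℤ×ℤ) :=
  {p | y ≤ p.2 ∧ p.2 < y + n ∧ p.2 - y - n ≤ p.1 ∧ p.1 < n - (p.2 - y)}

lemma pyr2_tileable (y : ℤ) : ∃ T, IsTilingBy IsLTromino T (pyr 2 y) := by
  have s := tiling_union (tiling_single (P := IsLTromino) (L_ne (-2) y))
    (tiling_single (P := IsLTromino) (L_nw 0 y)) (by
      rw [Set.disjoint_left]; rintro ⟨a,b⟩ h h'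
      simp [Prod.ext_iff] at h h'; omega)
  refine ⟨_, tiling_congr s ?_⟩
  ext ⟨a,b⟩; simp [pyr, Prod.ext_iff]; omega

lemma pyr3_tileable (y : ℤ) : ∃ T, IsTilingBy IsLTromino T (pyr 3 y) := by
  obtain ⟨TB, hB⟩ := rect_tileable (-1) y
  have s1 := tiling_union (tiling_single (P := IsLTromino) (L_ne (-3) y)) hB (by
    rw [Set.disjoint_left]; rintro ⟨a,b⟩ h h'
    simp [strip, Prod.ext_iff] at h h'; omega)
  have s2 := tiling_union s1 (tiling_single (P := IsLTromino) (L_nw 1 y)) (by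
    rw [Set.disjoint_left]; rintro ⟨a,b⟩ h h'
    simp [strip, Prod.ext_iff] at h h'; omega)
  refine ⟨_, tiling_congr s2 ?_⟩
  ext ⟨a,b⟩; simp [pyr, strip, Prod.ext_iff]; omega

lemma pyr_tileable : ∀ n : ℕ, 2 ≤ n → (n % 3 = 0 ∨ n % 3 = 2) →
    ∀ y : ℤ, ∃ T, IsTilingBy IsLTromino T (pyr n y) := by
  intro n
  induction n using Nat.strong_induction_on with
  | _ n ih =>
    intro h2 hmod y
    rcases lt_or_ge n 5 with h5 | h5
    · interval_cases n
      · exact pyr2_tileable y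
      · exact pyr3_tileable y
      · omega
    · obtain ⟨T1, h1⟩ := trap_tileable n y (by exact_mod_cast by omega)
      obtain ⟨T2, h2'⟩ := ih (n-3) (by omega) (by omega) (by omega) (y+3)
      have hc : (((n-3 : ℕ)) : ℤ) = (n : ℤ) - 3 := by omega
      have s := tiling_union h1 h2' (by
        rw [Set.disjoint_left]; rintro ⟨a,b⟩ h h'
        simp [trap, pyr, hc] at h h'; omega)
      refine ⟨_, tiling_congr s ?_⟩
      ext ⟨a,b⟩; simp [trap, pyr, hc]; omega

/-- Reflection across the line y = -1/2. -/
def ref (p : ℤ × ℤ) : ℤ × ℤ := (p.1, -1 - p.2)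

lemma ref_inj : Function.Injective ref := by
  rintro ⟨a,b⟩ ⟨c,d⟩ h
  simp [ref, Prod.ext_iff] at h ⊢; try omega

lemma ref_image (R : Set (ℤ×ℤ)) : ref '' R = {p | (p.1, -1 - p.2) ∈ R} := by
  ext ⟨a,b⟩
  constructor
  · rintro ⟨⟨c,d⟩, hq, h⟩
    simp [ref, Prod.ext_iff] at h
    obtain ⟨rfl, h2⟩ := h
    have : d = -1 - b := by omega
    subst this; exact hq
  · intro h
    exact ⟨(a, -1-b), h, by simp [ref, Prod.ext_iff]; try omega⟩

lemma ref_L {t : Set (ℤ×ℤ)} (h : IsLTromino t) : IsLTromino (ref '' t) := by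
  obtain ⟨x, y, c, hc, rfl⟩ := h
  have himg : ref '' ({(x, y), (x+1, y), (x, y+1), (x+1, y+1)} : Set (ℤ×ℤ)) =
      ({(x, -2-y), (x+1, -2-y), (x, -2-y+1), (x+1, -2-y+1)} : Set (ℤ×ℤ)) := by
    simp only [Set.image_insert_eq, Set.image_singleton, ref]
    ext ⟨a,b⟩; simp [Prod.ext_iff]; omega
  refine ⟨x, -2-y, ref c, ?_, ?_⟩
  · rw [← himg]; exact Set.mem_image_of_mem _ hc
  · rw [Set.image_diff ref_inj, Set.image_singleton, himg]

lemma ref_tiling {T : Set (Set (ℤ×ℤ))} {R : Set (ℤ×ℤ)} (h : IsTilingBy IsLTromino T R) :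
    IsTilingBy IsLTromino ((fun t => ref '' t) '' T) (ref '' R) := by
  obtain ⟨hP, hD, hU⟩ := h
  refine ⟨?_, ?_, ?_⟩
  · rintro _ ⟨t, ht, rfl⟩; exact ref_L (hP t ht)
  · rintro _ ⟨t, ht, rfl⟩ _ ⟨s, hs, rfl⟩ hne
    have hts : t ≠ s := by rintro rfl; exact hne rfl
    exact (Set.disjoint_image_iff ref_inj).2 (hD ht hs hts)
  · rw [← hU]
    ext p
    simp only [Set.mem_sUnion, Set.mem_image]
    constructor
    · rintro ⟨_, ⟨t, ht, rfl⟩, hp⟩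
      obtain ⟨q, hq, rfl⟩ := hp
      exact ⟨q, ⟨t, ht, hq⟩, rfl⟩
    · rintro ⟨q, ⟨t, ht, hq⟩, rfl⟩
      exact ⟨ref '' t, ⟨t, ht, rfl⟩, Set.mem_image_of_mem _ hq⟩

lemma max_abs (a : ℤ) : max |a| |a+1| = if 0 ≤ a then a + 1 else -a := by
  rcases le_or_gt 0 a with h | h
  · rw [if_pos h, abs_of_nonneg h, abs_of_nonneg (by omega), max_eq_right (by omega)]
  · rw [if_neg (not_le.2 h), abs_of_neg h, abs_of_nonpos (by omega), max_eq_left (by omega)]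

lemma AD_eq (n : ℕ) : aztecDiamond n = pyr n 0 ∪ ref '' (pyr n 0) := by
  rw [ref_image]
  ext ⟨a,b⟩
  simp only [aztecDiamond, pyr, Set.mem_setOf_eq, Set.mem_union, max_abs]
  split_ifs <;> omega

lemma AD_disj (n : ℕ) : Disjoint (pyr n 0) (ref '' (pyr n 0)) := by
  rw [ref_image, Set.disjoint_left]
  rintro ⟨a,b⟩ h h'
  simp [pyr] at h h'; omega

lemma AD_tileable (n : ℕ) (h2 : 2 ≤ n) (hmod : n % 3 = 0 ∨ n % 3 = 2) :
    ∃ T, IsTilingBy IsLTromino T (aztecDiamond n) := by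
  obtain ⟨T, hT⟩ := pyr_tileable n h2 hmod 0
  exact ⟨_, tiling_congr (tiling_union hT (ref_tiling hT) (AD_disj n)) (AD_eq n).symm⟩

end AzAux

theorem aztecDiamond_tileable (k : ℕ) (hk : 1 ≤ k) :
    (∃ T : Set (Set (ℤ × ℤ)), IsTilingBy IsLTromino T (aztecDiamond (3 * k))) ∧
    (∃ T : Set (Set (ℤ × ℤ)), IsTilingBy IsLTromino T (aztecDiamond (3 * k + 2))) := by
  exact ⟨AzAux.AD_tileable _ (by omega) (by omega),
    AzAux.AD_tileable _ (by omega) (by omega)⟩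
end

section
/- The Aztec rectangle AR(2,5) admits an L-tromino tiling, and the Aztec rectangle AR(3,6) admits an L-tromino tiling. -/
def T25 : Set (Set (ℤ × ℤ)) :=
  {({((0:ℤ), (1:ℤ)), ((1:ℤ), (0:ℤ)), ((1:ℤ), (1:ℤ))} : Set (ℤ × ℤ)),
   ({((0:ℤ), (2:ℤ)), ((1:ℤ), (2:ℤ)), ((1:ℤ), (3:ℤ))} : Set (ℤ × ℤ)),
   ({((2:ℤ), (0:ℤ)), ((2:ℤ), (1:ℤ)), ((3:ℤ), (1:ℤ))} : Set (ℤ × ℤ)),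
   ({((2:ℤ), (2:ℤ)), ((2:ℤ), (3:ℤ)), ((3:ℤ), (3:ℤ))} : Set (ℤ × ℤ)),
   ({((2:ℤ), (4:ℤ)), ((3:ℤ), (4:ℤ)), ((3:ℤ), (5:ℤ))} : Set (ℤ × ℤ)),
   ({((3:ℤ), (2:ℤ)), ((4:ℤ), (2:ℤ)), ((4:ℤ), (3:ℤ))} : Set (ℤ × ℤ)),
   ({((4:ℤ), (4:ℤ)), ((5:ℤ), (3:ℤ)), ((5:ℤ), (4:ℤ))} : Set (ℤ × ℤ)),
   ({((4:ℤ), (5:ℤ)), ((4:ℤ), (6:ℤ)), ((5:ℤ), (6:ℤ))} : Set (ℤ × ℤ)),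
   ({((5:ℤ), (5:ℤ)), ((6:ℤ), (4:ℤ)), ((6:ℤ), (5:ℤ))} : Set (ℤ × ℤ))}
set_option maxHeartbeats 1000000 in
lemma T25_tiling : IsTilingBy IsLTromino T25 (aztecRect 2 5) := by
  refine ⟨?_, ?_, ?_⟩
  · intro t ht
    simp only [T25, Set.mem_insert_iff, Set.mem_singleton_iff] at ht
    rcases ht with rfl|rfl|rfl|rfl|rfl|rfl|rfl|rfl|rfl
    · exact ⟨0, 0, (0, 0), by norm_num, by ext ⟨a, b⟩; simp [Prod.ext_iff]; omega⟩
    · exact ⟨0, 2, (0, 3), by norm_num, by ext ⟨a, b⟩; simp [Prod.ext_iff]; omega⟩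
    · exact ⟨2, 0, (3, 0), by norm_num, by ext ⟨a, b⟩; simp [Prod.ext_iff]; omega⟩
    · exact ⟨2, 2, (3, 2), by norm_num, by ext ⟨a, b⟩; simp [Prod.ext_iff]; omega⟩
    · exact ⟨2, 4, (2, 5), by norm_num, by ext ⟨a, b⟩; simp [Prod.ext_iff]; omega⟩
    · exact ⟨3, 2, (3, 3), by norm_num, by ext ⟨a, b⟩; simp [Prod.ext_iff]; omega⟩
    · exact ⟨4, 3, (4, 3), by norm_num, by ext ⟨a, b⟩; simp [Prod.ext_iff]; omega⟩
    · exact ⟨4, 5, (5, 5), by norm_num, by ext ⟨a, b⟩; simp [Prod.ext_iff]; omega⟩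
    · exact ⟨5, 4, (5, 4), by norm_num, by ext ⟨a, b⟩; simp [Prod.ext_iff]; omega⟩
  · intro s hs t ht hst
    simp only [T25, Set.mem_insert_iff, Set.mem_singleton_iff] at hs ht
    rcases hs with rfl|rfl|rfl|rfl|rfl|rfl|rfl|rfl|rfl <;>
      rcases ht with rfl|rfl|rfl|rfl|rfl|rfl|rfl|rfl|rfl <;>
      first
        | exact absurd rfl hst
        | (simp only [id, Set.disjoint_left]; rintro ⟨a, b⟩ h1 h2;
           simp only [Set.mem_insert_iff, Set.mem_singleton_iff, Prod.mk.injEq] at h1 h2; omega)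
  · ext ⟨a, b⟩
    simp only [T25, aztecRect, Set.sUnion_insert, Set.sUnion_singleton, Set.mem_union,
      Set.mem_insert_iff, Set.mem_singleton_iff, Set.mem_setOf_eq, Prod.mk.injEq]
    constructor
    · intro h; omega
    · intro h
      have hb1 : 0 ≤ b := by omega
      have hb2 : b < 7 := by omega
      have ha1 : 0 ≤ a := by omega
      have ha2 : a ≤ 6 := by omega
      interval_cases a <;> interval_cases b <;> first | decide | (exfalso; omega) | norm_num

def T36 : Set (Set (ℤ × ℤ)) :=
  {({((0:ℤ), (2:ℤ)), ((1:ℤ), (1:ℤ)), ((1:ℤ), (2:ℤ))} : Set (ℤ × ℤ)),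
   ({((0:ℤ), (3:ℤ)), ((1:ℤ), (3:ℤ)), ((1:ℤ), (4:ℤ))} : Set (ℤ × ℤ)),
   ({((2:ℤ), (0:ℤ)), ((3:ℤ), (0:ℤ)), ((3:ℤ), (1:ℤ))} : Set (ℤ × ℤ)),
   ({((2:ℤ), (1:ℤ)), ((2:ℤ), (2:ℤ)), ((3:ℤ), (2:ℤ))} : Set (ℤ × ℤ)),
   ({((2:ℤ), (3:ℤ)), ((2:ℤ), (4:ℤ)), ((3:ℤ), (4:ℤ))} : Set (ℤ × ℤ)),
   ({((2:ℤ), (5:ℤ)), ((3:ℤ), (5:ℤ)), ((3:ℤ), (6:ℤ))} : Set (ℤ × ℤ)),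
   ({((3:ℤ), (3:ℤ)), ((4:ℤ), (3:ℤ)), ((4:ℤ), (4:ℤ))} : Set (ℤ × ℤ)),
   ({((4:ℤ), (1:ℤ)), ((4:ℤ), (2:ℤ)), ((5:ℤ), (2:ℤ))} : Set (ℤ × ℤ)),
   ({((4:ℤ), (5:ℤ)), ((5:ℤ), (4:ℤ)), ((5:ℤ), (5:ℤ))} : Set (ℤ × ℤ)),
   ({((4:ℤ), (6:ℤ)), ((4:ℤ), (7:ℤ)), ((5:ℤ), (7:ℤ))} : Set (ℤ × ℤ)),
   ({((5:ℤ), (3:ℤ)), ((6:ℤ), (3:ℤ)), ((6:ℤ), (4:ℤ))} : Set (ℤ × ℤ)),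
   ({((5:ℤ), (6:ℤ)), ((6:ℤ), (5:ℤ)), ((6:ℤ), (6:ℤ))} : Set (ℤ × ℤ)),
   ({((5:ℤ), (8:ℤ)), ((6:ℤ), (7:ℤ)), ((6:ℤ), (8:ℤ))} : Set (ℤ × ℤ)),
   ({((7:ℤ), (4:ℤ)), ((7:ℤ), (5:ℤ)), ((8:ℤ), (5:ℤ))} : Set (ℤ × ℤ)),
   ({((7:ℤ), (6:ℤ)), ((7:ℤ), (7:ℤ)), ((8:ℤ), (6:ℤ))} : Set (ℤ × ℤ))}
set_option maxHeartbeats 1000000 in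
lemma T36_tiling : IsTilingBy IsLTromino T36 (aztecRect 3 6) := by
  refine ⟨?_, ?_, ?_⟩
  · intro t ht
    simp only [T36, Set.mem_insert_iff, Set.mem_singleton_iff] at ht
    rcases ht with rfl|rfl|rfl|rfl|rfl|rfl|rfl|rfl|rfl|rfl|rfl|rfl|rfl|rfl|rfl
    · exact ⟨0, 1, (0, 1), by norm_num, by ext ⟨a, b⟩; simp [Prod.ext_iff]; omega⟩
    · exact ⟨0, 3, (0, 4), by norm_num, by ext ⟨a, b⟩; simp [Prod.ext_iff]; omega⟩
    · exact ⟨2, 0, (2, 1), by norm_num, by ext ⟨a, b⟩; simp [Prod.ext_iff]; omega⟩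
    · exact ⟨2, 1, (3, 1), by norm_num, by ext ⟨a, b⟩; simp [Prod.ext_iff]; omega⟩
    · exact ⟨2, 3, (3, 3), by norm_num, by ext ⟨a, b⟩; simp [Prod.ext_iff]; omega⟩
    · exact ⟨2, 5, (2, 6), by norm_num, by ext ⟨a, b⟩; simp [Prod.ext_iff]; omega⟩
    · exact ⟨3, 3, (3, 4), by norm_num, by ext ⟨a, b⟩; simp [Prod.ext_iff]; omega⟩
    · exact ⟨4, 1, (5, 1), by norm_num, by ext ⟨a, b⟩; simp [Prod.ext_iff]; omega⟩
    · exact ⟨4, 4, (4, 4), by norm_num, by ext ⟨a, b⟩; simp [Prod.ext_iff]; omega⟩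
    · exact ⟨4, 6, (5, 6), by norm_num, by ext ⟨a, b⟩; simp [Prod.ext_iff]; omega⟩
    · exact ⟨5, 3, (5, 4), by norm_num, by ext ⟨a, b⟩; simp [Prod.ext_iff]; omega⟩
    · exact ⟨5, 5, (5, 5), by norm_num, by ext ⟨a, b⟩; simp [Prod.ext_iff]; omega⟩
    · exact ⟨5, 7, (5, 7), by norm_num, by ext ⟨a, b⟩; simp [Prod.ext_iff]; omega⟩
    · exact ⟨7, 4, (8, 4), by norm_num, by ext ⟨a, b⟩; simp [Prod.ext_iff]; omega⟩
    · exact ⟨7, 6, (8, 7), by norm_num, by ext ⟨a, b⟩; simp [Prod.ext_iff]; omega⟩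
  · intro s hs t ht hst
    simp only [T36, Set.mem_insert_iff, Set.mem_singleton_iff] at hs ht
    rcases hs with rfl|rfl|rfl|rfl|rfl|rfl|rfl|rfl|rfl|rfl|rfl|rfl|rfl|rfl|rfl <;>
      rcases ht with rfl|rfl|rfl|rfl|rfl|rfl|rfl|rfl|rfl|rfl|rfl|rfl|rfl|rfl|rfl <;>
      first
        | exact absurd rfl hst
        | (simp only [id, Set.disjoint_left]; rintro ⟨a, b⟩ h1 h2;
           simp only [Set.mem_insert_iff, Set.mem_singleton_iff, Prod.mk.injEq] at h1 h2; omega)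
  · ext ⟨a, b⟩
    simp only [T36, aztecRect, Set.sUnion_insert, Set.sUnion_singleton, Set.mem_union,
      Set.mem_insert_iff, Set.mem_singleton_iff, Set.mem_setOf_eq, Prod.mk.injEq]
    constructor
    · intro h; omega
    · intro h
      have hb1 : 0 ≤ b := by omega
      have hb2 : b < 9 := by omega
      have ha1 : 0 ≤ a := by omega
      have ha2 : a ≤ 8 := by omega
      interval_cases a <;> interval_cases b <;> first | decide | (exfalso; omega) | norm_num


theorem aztecRect_base_cases :
    (∃ T : Set (Set (ℤ × ℤ)), IsTilingBy IsLTromino T (aztecRect 2 5)) ∧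
    (∃ T : Set (Set (ℤ × ℤ)), IsTilingBy IsLTromino T (aztecRect 3 6)) :=
  ⟨⟨T25, T25_tiling⟩, ⟨T36, T36_tiling⟩⟩
end
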